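/- arXiv:0910.2861 — 5 statements merged into one kernel-verified Lean document; each statement's English description precedes it below -/
import Mathlib

section
/- Let n ≥ 1 and let Θ = Θ(z, z̄, w̄) be holomorphic near 0 in ℂⁿ×ℂⁿ×ℂ with Θ = −w̄ + O(2), and suppose that Θ together with its conjugate function Θ̄ satisfies the pair of identities w̄ ≡ Θ̄(z̄, z, Θ(z, z̄, w̄)) and w ≡ Θ(z, z̄, Θ̄(z̄, z, w)) near the origin. Then the two zero-sets {(z,w) : 0 = −w + Θ(z, z̄, w̄)} and {(z,w) : 0 = −w̄ + Θ̄(z̄, z, w)} coincide in a neighborhood of 0 in ℂ^{n+1}, and this common set is a one-codimensional real analytic hypersurface through 0: there exists a real-valued real analytic function φ(x,y,v) near 0 ∈ ℝⁿ×ℝⁿ×ℝ with φ(0) = 0 and dφ(0) = 0 such that, near 0, the set equals {(z,w) = (x+iy, u+iv) : u = φ(x,y,v)}. -/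
open Topology Filter Set

noncomputable section

/-- The space ℂⁿ × ℂⁿ × ℂ of variables (z, z̄, w̄) = (z, t̄). -/
abbrev Pt (n : ℕ) := (Fin n → ℂ) × (Fin n → ℂ) × ℂ

/-- Partial derivative ∂/∂z_k. -/
def pdZ {n : ℕ} (k : Fin n) (f : Pt n → ℂ) : Pt n → ℂ :=
  fun p => fderiv ℂ f p (Pi.single k 1, 0, 0)

/-- The direction in `Pt n` corresponding to the variable t̄_μ
(the first n of these are the z̄_j, the last one is w̄). -/
def tdir (n : ℕ) (μ : Fin (n + 1)) : Pt n :=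
  if h : (μ : ℕ) < n then (0, Pi.single ⟨μ, h⟩ 1, 0) else (0, 0, 1)

/-- Partial derivative ∂/∂t̄_μ. -/
def pdT {n : ℕ} (μ : Fin (n + 1)) (f : Pt n → ℂ) : Pt n → ℂ :=
  fun p => fderiv ℂ f p (tdir n μ)

/-- The (n+1)×(n+1) matrix whose first row is (Θ_{t̄_μ})_μ and whose (1+k)-th row
is (Θ_{z_k t̄_μ})_μ; its determinant is Δ. -/
def DeltaMat {n : ℕ} (Θ : Pt n → ℂ) (p : Pt n) : Matrix (Fin (n + 1)) (Fin (n + 1)) ℂ :=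
  Matrix.of fun i μ =>
    Fin.cons (α := fun _ => ℂ) (pdT μ Θ p) (fun k : Fin n => pdT μ (pdZ k Θ) p) i

/-- The Jacobian-like determinant Δ. -/
def Delta {n : ℕ} (Θ : Pt n → ℂ) (p : Pt n) : ℂ := (DeltaMat Θ p).det

/-- Δ^μ_{[0_{1+ℓ}]} : the determinant Δ with its μ-th column replaced by the
standard basis column with 1 in the (1+ℓ)-th entry. -/
def DeltaCol {n : ℕ} (Θ : Pt n → ℂ) (ℓ : Fin n) (μ : Fin (n + 1)) (p : Pt n) : ℂ :=
  ((DeltaMat Θ p).updateCol μ (Pi.single ℓ.succ 1)).det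

/-- Δ^τ_{[t̄^μ t̄^ν]} : the determinant Δ with its τ-th column replaced by
(Θ_{t̄_μ t̄_ν}, Θ_{z_1 t̄_μ t̄_ν}, …, Θ_{z_n t̄_μ t̄_ν})ᵀ. -/
def DeltaTT {n : ℕ} (Θ : Pt n → ℂ) (μ ν τ : Fin (n + 1)) (p : Pt n) : ℂ :=
  ((DeltaMat Θ p).updateCol τ
    (Fin.cons (α := fun _ => ℂ) (pdT ν (pdT μ Θ) p)
      (fun k : Fin n => pdT ν (pdT μ (pdZ k Θ)) p))).det

/-- The conjugate function Θ̄(a,b,c) := conj (Θ (conj a, conj b, conj c)). -/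
def conjFun {n : ℕ} (Θ : Pt n → ℂ) : Pt n → ℂ :=
  fun p => (starRingEnd ℂ)
    (Θ (fun k => (starRingEnd ℂ) (p.1 k), fun k => (starRingEnd ℂ) (p.2.1 k),
        (starRingEnd ℂ) p.2.2))

/-- Θ = -w̄ + O(2) : Θ vanishes at 0 and its differential at 0 is v ↦ -v_{w̄}. -/
def IsOrderTwo {n : ℕ} (Θ : Pt n → ℂ) : Prop :=
  Θ 0 = 0 ∧ ∀ v : Pt n, fderiv ℂ Θ 0 v = -v.2.2

/-- The pair of reality identities w̄ ≡ Θ̄(z̄, z, Θ(z, z̄, w̄)) and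
w ≡ Θ(z, z̄, Θ̄(z̄, z, w)), holding near the origin. -/
def Reality {n : ℕ} (Θ : Pt n → ℂ) : Prop :=
  (∀ᶠ p in 𝓝 (0 : Pt n), p.2.2 = conjFun Θ (p.2.1, p.1, Θ p)) ∧
  (∀ᶠ p in 𝓝 (0 : Pt n), p.2.2 = Θ (p.1, p.2.1, conjFun Θ (p.2.1, p.1, p.2.2)))

/-- The hypersurface M = {(z,w) : w = Θ(z, z̄, w̄)}. -/
def Mset {n : ℕ} (Θ : Pt n → ℂ) : Set ((Fin n → ℂ) × ℂ) :=
  {q | q.2 = Θ (q.1, fun k => (starRingEnd ℂ) (q.1 k), (starRingEnd ℂ) q.2)}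

/-- The Heisenberg pseudosphere of signature q :
{Im w = |z₁|² + ⋯ + |z_q|² − |z_{q+1}|² − ⋯ − |z_n|²}. -/
def HeisenbergPS (n q : ℕ) : Set ((Fin n → ℂ) × ℂ) :=
  {p | p.2.im = ∑ k : Fin n, (if (k : ℕ) < q then (1 : ℝ) else -1) * Complex.normSq (p.1 k)}

/-- M is pseudospherical at 0: some biholomorphism between neighborhoods of 0
maps M locally onto a piece of a Heisenberg pseudosphere of some signature q. -/
def PseudosphericalAt0 {n : ℕ} (M : Set ((Fin n → ℂ) × ℂ)) : Prop :=
  ∃ (U U' : Set ((Fin n → ℂ) × ℂ)) (h g : ((Fin n → ℂ) × ℂ) → (Fin n → ℂ) × ℂ) (q : ℕ),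
    q ≤ n ∧ IsOpen U ∧ IsOpen U' ∧ (0 : (Fin n → ℂ) × ℂ) ∈ U ∧
    AnalyticOnNhd ℂ h U ∧ AnalyticOnNhd ℂ g U' ∧
    Set.MapsTo h U U' ∧ Set.MapsTo g U' U ∧
    Set.LeftInvOn g h U ∧ Set.LeftInvOn h g U' ∧
    h '' (M ∩ U) = HeisenbergPS n q ∩ U'

/-- The conjugate zero-set {(z,w) : 0 = −w̄ + Θ̄(z̄, z, w)}. -/
def MsetConj {n : ℕ} (Θ : Pt n → ℂ) : Set ((Fin n → ℂ) × ℂ) :=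
  {q | (starRingEnd ℂ) q.2 = conjFun Θ (fun k => (starRingEnd ℂ) (q.1 k), q.1, q.2)}

section AuxNS
open Complex

abbrev Esp (n : ℕ) := (Fin n → ℂ) × ℂ

/-- componentwise conjugation as ℝ-CLM -/
def cPi (n : ℕ) : (Fin n → ℂ) →L[ℝ] (Fin n → ℂ) :=
  ContinuousLinearMap.pi fun k => Complex.conjCLE.toContinuousLinearMap.comp (ContinuousLinearMap.proj k)

def Cmap (n : ℕ) : Esp n →L[ℝ] Pt n :=
  (ContinuousLinearMap.fst ℝ _ _).prod
    (((cPi n).comp (ContinuousLinearMap.fst ℝ _ _)).prod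
      (Complex.conjCLE.toContinuousLinearMap.comp (ContinuousLinearMap.snd ℝ _ _)))

lemma Cmap_apply {n : ℕ} (q : Esp n) :
    Cmap n q = (q.1, fun k => (starRingEnd ℂ) (q.1 k), (starRingEnd ℂ) q.2) := rfl


variable {n : ℕ} (Θ : Pt n → ℂ)

def Theta' : Esp n → ℂ := fun q => Θ (Cmap n q)
def rho : Esp n → ℂ := fun q => q.2 - Theta' Θ q
def Gfun : Esp n → ℝ := fun q => (rho Θ q).re
def Hfun : Esp n → Esp n := fun q => (q.1, (↑(Gfun Θ q) + Complex.I * ↑q.2.im : ℂ))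

variable {Θ}

lemma theta'_analytic (hΘ : AnalyticAt ℂ Θ 0) : AnalyticAt ℝ (Theta' Θ) 0 := by
  have h1 : AnalyticAt ℝ Θ ((Cmap n) 0) := by rw [map_zero]; exact hΘ.restrictScalars
  exact h1.comp ((Cmap n).analyticAt 0)

lemma rho_analytic (hΘ : AnalyticAt ℂ Θ 0) : AnalyticAt ℝ (rho Θ) 0 :=
  ((ContinuousLinearMap.snd ℝ (Fin n → ℂ) ℂ).analyticAt 0).sub (theta'_analytic hΘ)

lemma gfun_analytic (hΘ : AnalyticAt ℂ Θ 0) : AnalyticAt ℝ (Gfun Θ) 0 :=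
  (Complex.reCLM.analyticAt _).comp (rho_analytic hΘ)

lemma hfun_analytic (hΘ : AnalyticAt ℂ Θ 0) : AnalyticAt ℝ (Hfun Θ) 0 := by
  apply AnalyticAt.prod
  · exact (ContinuousLinearMap.fst ℝ (Fin n → ℂ) ℂ).analyticAt 0
  · exact ((Complex.ofRealCLM.analyticAt _).comp (gfun_analytic hΘ)).add
      ((((Complex.I • Complex.ofRealCLM).comp (Complex.imCLM.comp
        (ContinuousLinearMap.snd ℝ (Fin n → ℂ) ℂ))).analyticAt 0))

/-- the real-linear derivative of Θ at 0 -/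
def Dc (Θ : Pt n → ℂ) : Pt n →L[ℝ] ℂ := (fderiv ℂ Θ 0).restrictScalars ℝ

def Drho (Θ : Pt n → ℂ) : Esp n →L[ℝ] ℂ :=
  ContinuousLinearMap.snd ℝ (Fin n → ℂ) ℂ - (Dc Θ).comp (Cmap n)

lemma theta'_hasFDerivAt (hΘ : AnalyticAt ℂ Θ 0) :
    HasFDerivAt (Theta' Θ) ((Dc Θ).comp (Cmap n)) 0 := by
  have h1 : HasFDerivAt Θ (fderiv ℂ Θ 0) 0 := hΘ.differentiableAt.hasFDerivAt
  have h2 : HasFDerivAt Θ (Dc Θ) ((Cmap n) 0) := by rw [map_zero]; exact h1.restrictScalars ℝ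
  exact h2.comp 0 ((Cmap n).hasFDerivAt)

lemma rho_hasFDerivAt (hΘ : AnalyticAt ℂ Θ 0) : HasFDerivAt (rho Θ) (Drho Θ) 0 :=
  ((ContinuousLinearMap.snd ℝ (Fin n → ℂ) ℂ).hasFDerivAt).sub (theta'_hasFDerivAt hΘ)

lemma Drho_apply (h2 : Θ 0 = 0 ∧ ∀ v : Pt n, fderiv ℂ Θ 0 v = -v.2.2) (δ : Esp n) :
    Drho Θ δ = δ.2 + (starRingEnd ℂ) δ.2 := by
  have : Dc Θ ((Cmap n) δ) = -(starRingEnd ℂ) δ.2 := by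
    have := h2.2 ((Cmap n) δ)
    simpa [Dc, Cmap_apply] using this
  simp [Drho, this, sub_neg_eq_add]

-- the ℂ-part equiv: w ↦ 2*w.re + w.im*I
noncomputable def eA : ℂ ≃L[ℝ] ℂ := by
  refine LinearEquiv.toContinuousLinearEquiv
    { toFun := fun w => (3/2 : ℝ) • w + (1/2 : ℝ) • (starRingEnd ℂ) w
      invFun := fun w => (3/4 : ℝ) • w - (1/4 : ℝ) • (starRingEnd ℂ) w
      map_add' := by intro a b; simp [map_add]; ring
      map_smul' := by intro r a; simp [Complex.real_smul, map_mul, Complex.conj_ofReal]; ring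
      left_inv := by
        intro w
        simp only [map_add, map_sub, map_smul, Complex.conj_conj, Complex.real_smul]
        push_cast
        simp only [map_mul, map_div₀, map_ofNat, map_one, Complex.conj_conj]
        ring
      right_inv := by
        intro w
        simp only [map_add, map_sub, map_smul, Complex.conj_conj, Complex.real_smul]
        push_cast
        simp only [map_mul, map_div₀, map_ofNat, map_one, Complex.conj_conj]
        ring }

lemma eA_apply (w : ℂ) : eA w = (3/2 : ℝ) • w + (1/2 : ℝ) • (starRingEnd ℂ) w := rfl

variable {n : ℕ} {Θ : Pt n → ℂ}

def DGm (Θ : Pt n → ℂ) : Esp n →L[ℝ] ℝ := Complex.reCLM.comp (Drho Θ)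

lemma gfun_hasFDerivAt (hΘ : AnalyticAt ℂ Θ 0) : HasFDerivAt (Gfun Θ) (DGm Θ) 0 :=
  Complex.reCLM.hasFDerivAt.comp 0 (rho_hasFDerivAt hΘ)

def DH2 (Θ : Pt n → ℂ) : Esp n →L[ℝ] ℂ :=
  Complex.ofRealCLM.comp (DGm Θ) +
    (Complex.I • Complex.ofRealCLM).comp (Complex.imCLM.comp (ContinuousLinearMap.snd ℝ (Fin n → ℂ) ℂ))

lemma hfun2_hasFDerivAt (hΘ : AnalyticAt ℂ Θ 0) :
    HasFDerivAt (fun q : Esp n => (↑(Gfun Θ q) + Complex.I * ↑q.2.im : ℂ)) (DH2 Θ) 0 := by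
  exact (Complex.ofRealCLM.hasFDerivAt.comp 0 (gfun_hasFDerivAt hΘ)).add
    (((Complex.I • Complex.ofRealCLM).comp (Complex.imCLM.comp
      (ContinuousLinearMap.snd ℝ (Fin n → ℂ) ℂ))).hasFDerivAt)

lemma hfun_hasFDerivAt (hΘ : AnalyticAt ℂ Θ 0) :
    HasFDerivAt (Hfun Θ) ((ContinuousLinearMap.fst ℝ (Fin n → ℂ) ℂ).prod (DH2 Θ)) 0 :=
  ((ContinuousLinearMap.fst ℝ (Fin n → ℂ) ℂ).hasFDerivAt).prodMk (hfun2_hasFDerivAt hΘ)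

def Amap (n : ℕ) : Esp n ≃L[ℝ] Esp n := (ContinuousLinearEquiv.refl ℝ (Fin n → ℂ)).prodCongr eA

lemma Amap_coe (h2 : Θ 0 = 0 ∧ ∀ v : Pt n, fderiv ℂ Θ 0 v = -v.2.2) :
    ((Amap n : Esp n ≃L[ℝ] Esp n) : Esp n →L[ℝ] Esp n) =
      (ContinuousLinearMap.fst ℝ (Fin n → ℂ) ℂ).prod (DH2 Θ) := by
  apply ContinuousLinearMap.ext
  intro δ
  refine Prod.ext rfl ?_
  show eA δ.2 = DH2 Θ δ
  have hd : (DGm Θ) δ = (δ.2 + (starRingEnd ℂ) δ.2).re := by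
    simp [DGm, Drho_apply h2]
  apply Complex.ext <;>
    simp [eA_apply, DH2, hd, Complex.real_smul] <;> ring

lemma hfun_hasFDerivAt' (hΘ : AnalyticAt ℂ Θ 0)
    (h2 : Θ 0 = 0 ∧ ∀ v : Pt n, fderiv ℂ Θ 0 v = -v.2.2) :
    HasFDerivAt (Hfun Θ) ((Amap n : Esp n ≃L[ℝ] Esp n) : Esp n →L[ℝ] Esp n) 0 := by
  rw [Amap_coe h2]; exact hfun_hasFDerivAt hΘ

lemma hfun_zero (h2 : Θ 0 = 0 ∧ ∀ v : Pt n, fderiv ℂ Θ 0 v = -v.2.2) : Hfun Θ 0 = 0 := by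
  have : Theta' Θ (0 : Esp n) = 0 := by
    simp [Theta', map_zero, h2.1]
  simp [Hfun, Gfun, rho, this]


lemma hfun_strict (hΘ : AnalyticAt ℂ Θ 0)
    (h2 : Θ 0 = 0 ∧ ∀ v : Pt n, fderiv ℂ Θ 0 v = -v.2.2) :
    HasStrictFDerivAt (Hfun Θ) ((Amap n : Esp n ≃L[ℝ] Esp n) : Esp n →L[ℝ] Esp n) 0 := by
  obtain ⟨p, hp⟩ := hfun_analytic hΘ
  have h1 := hp.hasStrictFDerivAt
  have h2' : (continuousMultilinearCurryFin1 ℝ (Esp n) (Esp n)) (p 1)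
      = ((Amap n : Esp n ≃L[ℝ] Esp n) : Esp n →L[ℝ] Esp n) := by
    rw [← hp.fderiv_eq]
    exact (hfun_hasFDerivAt' hΘ h2).fderiv
  rwa [h2'] at h1

lemma exists_K (hΘ : AnalyticAt ℂ Θ 0)
    (h2 : Θ 0 = 0 ∧ ∀ v : Pt n, fderiv ℂ Θ 0 v = -v.2.2) :
    ∃ PH : OpenPartialHomeomorph (Esp n) (Esp n), ⇑PH = Hfun Θ ∧ 0 ∈ PH.source ∧ 0 ∈ PH.target ∧
      AnalyticAt ℝ (⇑PH.symm) 0 := by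
  have hstrict := hfun_strict hΘ h2
  refine ⟨hstrict.toOpenPartialHomeomorph (Hfun Θ), rfl, hstrict.mem_toOpenPartialHomeomorph_source, ?_, ?_⟩
  · have := hstrict.image_mem_toOpenPartialHomeomorph_target
    rwa [hfun_zero h2] at this
  · obtain ⟨p, hp⟩ := hfun_analytic hΘ
    have hcurry : (continuousMultilinearCurryFin1 ℝ (Esp n) (Esp n)) (p 1)
        = ((Amap n : Esp n ≃L[ℝ] Esp n) : Esp n →L[ℝ] Esp n) := by
      rw [← hp.fderiv_eq]
      exact (hfun_hasFDerivAt' hΘ h2).fderiv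
    have hp1 : p 1 = (continuousMultilinearCurryFin1 ℝ (Esp n) (Esp n)).symm
        ((Amap n : Esp n ≃L[ℝ] Esp n) : Esp n →L[ℝ] Esp n) := by
      rw [← hcurry]
      exact ((continuousMultilinearCurryFin1 ℝ (Esp n) (Esp n)).symm_apply_apply (p 1)).symm
    have hp' : HasFPowerSeriesAt (⇑(hstrict.toOpenPartialHomeomorph (Hfun Θ))) p 0 := hp
    have := (hstrict.toOpenPartialHomeomorph (Hfun Θ)).hasFPowerSeriesAt_symm
      hstrict.mem_toOpenPartialHomeomorph_source hp' hp1
    rw [HasStrictFDerivAt.toOpenPartialHomeomorph_coe, hfun_zero h2] at this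
    exact ⟨_, this⟩


def G2 (Θ : Pt n → ℂ) : Esp n → ℂ := fun q => (starRingEnd ℂ) (Theta' Θ q) + q.2

def D2 (Θ : Pt n → ℂ) : Esp n →L[ℝ] ℂ :=
  Complex.conjCLE.toContinuousLinearMap.comp ((Dc Θ).comp (Cmap n)) +
    ContinuousLinearMap.snd ℝ (Fin n → ℂ) ℂ

lemma g2_analytic (hΘ : AnalyticAt ℂ Θ 0) : AnalyticAt ℝ (G2 Θ) 0 :=
  ((Complex.conjCLE.toContinuousLinearMap.analyticAt _).comp (theta'_analytic hΘ)).add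
    ((ContinuousLinearMap.snd ℝ (Fin n → ℂ) ℂ).analyticAt 0)

lemma g2_hasFDerivAt (hΘ : AnalyticAt ℂ Θ 0) : HasFDerivAt (G2 Θ) (D2 Θ) 0 :=
  ((Complex.conjCLE.toContinuousLinearMap.hasFDerivAt).comp 0 (theta'_hasFDerivAt hΘ)).add
    ((ContinuousLinearMap.snd ℝ (Fin n → ℂ) ℂ).hasFDerivAt)

lemma g2_strict (hΘ : AnalyticAt ℂ Θ 0) : HasStrictFDerivAt (G2 Θ) (D2 Θ) 0 := by
  obtain ⟨p, hp⟩ := g2_analytic hΘ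
  have h1 := hp.hasStrictFDerivAt
  have h2' : (continuousMultilinearCurryFin1 ℝ (Esp n) ℂ) (p 1) = D2 Θ := by
    rw [← hp.fderiv_eq]; exact (g2_hasFDerivAt hΘ).fderiv
  rwa [h2'] at h1

lemma D2_zero (h2 : Θ 0 = 0 ∧ ∀ v : Pt n, fderiv ℂ Θ 0 v = -v.2.2) (c : ℂ) :
    D2 Θ ((0 : Fin n → ℂ), c) = 0 := by
  have : Dc Θ ((Cmap n) ((0 : Fin n → ℂ), c)) = -(starRingEnd ℂ) c := by
    have := h2.2 ((Cmap n) ((0 : Fin n → ℂ), c))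
    simpa [Dc, Cmap_apply] using this
  simp [D2, this]

lemma theta'_zero (h2 : Θ 0 = 0 ∧ ∀ v : Pt n, fderiv ℂ Θ 0 v = -v.2.2) :
    Theta' Θ (0 : Esp n) = 0 := by simp [Theta', map_zero, h2.1]

lemma rho_key (hΘ : AnalyticAt ℂ Θ 0)
    (h2 : Θ 0 = 0 ∧ ∀ v : Pt n, fderiv ℂ Θ 0 v = -v.2.2)
    (hR1 : ∀ᶠ p in 𝓝 (0 : Pt n), p.2.2 = conjFun Θ (p.2.1, p.1, Θ p)) :
    ∀ᶠ q : Esp n in 𝓝 0, ((rho Θ q).re = 0 → rho Θ q = 0) := by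
  have hlittle := (g2_strict hΘ).isLittleO.def (c := 1/4) (by norm_num)
  have htend1 : Tendsto (fun q : Esp n => (q.1, Theta' Θ q)) (𝓝 0) (𝓝 0) := by
    have hc : ContinuousAt (fun q : Esp n => (q.1, Theta' Θ q)) 0 :=
      continuousAt_fst.prodMk (theta'_analytic hΘ).continuousAt
    have h : Tendsto (fun q : Esp n => (q.1, Theta' Θ q)) (𝓝 0) (𝓝 ((0 : Esp n).1, Theta' Θ 0)) := hc
    rw [theta'_zero h2] at h
    exact h
  have htend : Tendsto (fun q : Esp n => ((q.1, Theta' Θ q), q)) (𝓝 0)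
      (𝓝 (((0 : Esp n), (0 : Esp n)))) := htend1.prodMk_nhds tendsto_id
  have hest := htend.eventually hlittle
  have htendC : Tendsto (Cmap n) (𝓝 (0 : Esp n)) (𝓝 (0 : Pt n)) := by
    have := (Cmap n).continuous.tendsto 0
    rwa [map_zero] at this
  have hRq := htendC.eventually hR1
  filter_upwards [hest, hRq] with q hq1 hq2 hre
  set r := rho Θ q with hr
  -- massage hq2
  have hconj : (starRingEnd ℂ) q.2 = (starRingEnd ℂ) (Theta' Θ (q.1, Theta' Θ q)) := by
    simpa [conjFun, Cmap_apply, Theta', Complex.conj_conj] using hq2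
  -- compute the pieces of hq1
  have hsub : (q.1, Theta' Θ q) - q = ((0 : Fin n → ℂ), -r) := by
    refine Prod.ext ?_ ?_ <;> simp [hr, rho, neg_sub]
  have hGdiff : G2 Θ (q.1, Theta' Θ q) - G2 Θ q = (starRingEnd ℂ) r - r := by
    have h1 : G2 Θ (q.1, Theta' Θ q) = (starRingEnd ℂ) q.2 + Theta' Θ q := by
      simp [G2, ← hconj]
    have h2' : G2 Θ q = (starRingEnd ℂ) (Theta' Θ q) + q.2 := rfl
    rw [h1, h2', hr, rho, map_sub]
    ring
  rw [hsub, hGdiff, D2_zero h2] at hq1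
  have hnorm1 : ‖((0 : Fin n → ℂ), -r)‖ = ‖r‖ := by
    rw [Prod.norm_def]
    simp [norm_nonneg]
  rw [sub_zero, hnorm1] at hq1
  -- now hq1 : ‖conj r - r‖ ≤ 1/4 * ‖r‖, hre : r.re = 0
  have e1 : (starRingEnd ℂ) r - r = ((-2 * r.im : ℝ) : ℂ) * Complex.I := by
    apply Complex.ext <;> simp <;> ring
  have e2 : r = ((r.im : ℝ) : ℂ) * Complex.I := by
    apply Complex.ext <;> simp [hre]
  rw [e1] at hq1
  nth_rewrite 2 [e2] at hq1
  simp only [norm_mul, Complex.norm_I, Complex.norm_real, Real.norm_eq_abs, mul_one] at hq1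
  have habs : |(-2 * r.im)| = 2 * |r.im| := by
    rw [abs_mul]; norm_num
  rw [← abs_mul, habs] at hq1
  have him : r.im = 0 := by
    have := abs_nonneg r.im
    have h0 : |r.im| = 0 := by linarith
    exact abs_eq_zero.mp h0
  apply Complex.ext <;> simp [hre, him]


def zmap (n : ℕ) : ((Fin n → ℝ) × (Fin n → ℝ) × ℝ) →L[ℝ] Esp n :=
  (ContinuousLinearMap.pi fun k =>
      Complex.ofRealCLM.comp ((ContinuousLinearMap.proj k).comp
        (ContinuousLinearMap.fst ℝ (Fin n → ℝ) ((Fin n → ℝ) × ℝ))) +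
      (Complex.I • Complex.ofRealCLM).comp ((ContinuousLinearMap.proj k).comp
        ((ContinuousLinearMap.fst ℝ (Fin n → ℝ) ℝ).comp
          (ContinuousLinearMap.snd ℝ (Fin n → ℝ) ((Fin n → ℝ) × ℝ))))).prod
    ((Complex.I • Complex.ofRealCLM).comp
      ((ContinuousLinearMap.snd ℝ (Fin n → ℝ) ℝ).comp
        (ContinuousLinearMap.snd ℝ (Fin n → ℝ) ((Fin n → ℝ) × ℝ))))

lemma zmap_apply {n : ℕ} (t : (Fin n → ℝ) × (Fin n → ℝ) × ℝ) :
    zmap n t = (fun k => (↑(t.1 k) + Complex.I * ↑(t.2.1 k) : ℂ), (Complex.I * ↑t.2.2 : ℂ)) := rfl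


end AuxNS

/-- if Θ = −w̄ + O(2) satisfies the pair of reality identities,
then the two zero-sets {w = Θ(z, z̄, w̄)} and {w̄ = Θ̄(z̄, z, w)} coincide near 0,
and this common set is a one-codimensional real analytic hypersurface through 0,
given near 0 by a graphed equation u = φ(x, y, v) with φ real analytic,
φ(0) = 0 and dφ(0) = 0. -/
theorem zero_sets_coincide_and_define_hypersurface {n : ℕ} (hn : 1 ≤ n)
    (Θ : Pt n → ℂ) (hΘ : AnalyticAt ℂ Θ 0) (h2 : IsOrderTwo Θ) (hR : Reality Θ) :
    ∃ U : Set ((Fin n → ℂ) × ℂ), IsOpen U ∧ (0 : (Fin n → ℂ) × ℂ) ∈ U ∧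
      Mset Θ ∩ U = MsetConj Θ ∩ U ∧
      ∃ φ : (Fin n → ℝ) × (Fin n → ℝ) × ℝ → ℝ,
        AnalyticAt ℝ φ 0 ∧ φ 0 = 0 ∧ fderiv ℝ φ 0 = 0 ∧
        Mset Θ ∩ U =
          {q : (Fin n → ℂ) × ℂ |
            q.2.re = φ (fun k => (q.1 k).re, fun k => (q.1 k).im, q.2.im)} ∩ U := by
  -- main proof

  classical
  have h2' : Θ 0 = 0 ∧ ∀ v : Pt n, fderiv ℂ Θ 0 v = -v.2.2 := h2
  have hR1 : ∀ᶠ p in 𝓝 (0 : Pt n), p.2.2 = conjFun Θ (p.2.1, p.1, Θ p) := hR.1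
  obtain ⟨PH, hPHcoe, hs0, ht0, hKa⟩ := exists_K hΘ h2'
  set K : Esp n → Esp n := ⇑PH.symm with hKdef
  have hkey := rho_key hΘ h2' hR1
  obtain ⟨V, hVP, hVopen, hV0⟩ := mem_nhds_iff.mp hkey
  set tmap : Esp n → Esp n := fun q => (q.1, Complex.I * (q.2.im : ℂ)) with htmapdef
  have htmapc : Continuous tmap := by
    apply Continuous.prodMk continuous_fst
    exact continuous_const.mul (Complex.continuous_ofReal.comp
      (Complex.continuous_im.comp continuous_snd))
  set U : Set (Esp n) := (PH.source ∩ V) ∩ tmap ⁻¹' PH.target with hUdef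
  have hUopen : IsOpen U := (PH.open_source.inter hVopen).inter (PH.open_target.preimage htmapc)
  have htm0 : tmap (0 : Esp n) = 0 := by simp [htmapdef]
  have hU0 : (0 : Esp n) ∈ U := by
    refine ⟨⟨hs0, hV0⟩, ?_⟩
    simp only [mem_preimage, htm0]
    exact ht0
  have hMset : ∀ q : Esp n, q ∈ Mset Θ ↔ rho Θ q = 0 := by
    intro q
    show q ∈ Mset Θ ↔ q.2 - Θ (Cmap n q) = 0
    rw [Cmap_apply, sub_eq_zero]
    exact Iff.rfl
  have hMM : Mset Θ = MsetConj Θ := by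
    ext q
    simp only [Mset, MsetConj, conjFun, mem_setOf_eq, Complex.conj_conj]
    constructor
    · intro h; exact congrArg (starRingEnd ℂ) h
    · intro h
      have := congrArg (starRingEnd ℂ) h
      simpa [Complex.conj_conj] using this
  have hK0 : K 0 = 0 := by
    have h := PH.left_inv hs0
    rw [hPHcoe, hfun_zero h2'] at h
    exact h
  set φ : (Fin n → ℝ) × (Fin n → ℝ) × ℝ → ℝ := fun t => (K (zmap n t)).2.re with hφdef
  have hφa : AnalyticAt ℝ φ 0 := by
    have h1 : AnalyticAt ℝ (fun t => K (zmap n t)) 0 := by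
      have hz : AnalyticAt ℝ K (zmap n 0) := by rw [map_zero]; exact hKa
      exact hz.comp ((zmap n).analyticAt 0)
    exact ((Complex.reCLM.comp (ContinuousLinearMap.snd ℝ (Fin n → ℂ) ℂ)).analyticAt _).comp h1
  have hφ0 : φ 0 = 0 := by simp [hφdef, map_zero, hK0]
  have hzt : ∀ q : Esp n,
      zmap n (fun k => (q.1 k).re, fun k => (q.1 k).im, q.2.im) = tmap q := by
    intro q
    rw [zmap_apply]
    refine Prod.ext ?_ rfl
    funext k
    show (((q.1 k).re : ℂ) + Complex.I * ((q.1 k).im : ℂ)) = q.1 k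
    rw [mul_comm]
    exact Complex.re_add_im _
  have hgraph : ∀ q ∈ U,
      (Gfun Θ q = 0 ↔ q.2.re = φ (fun k => (q.1 k).re, fun k => (q.1 k).im, q.2.im)) := by
    intro q hq
    obtain ⟨⟨hqs, hqV⟩, hqt⟩ := hq
    constructor
    · intro hG
      have hHq : Hfun Θ q = tmap q := by
        simp [Hfun, hG, htmapdef]
      have hKq : K (Hfun Θ q) = q := by rw [← hPHcoe]; exact PH.left_inv hqs
      rw [hHq] at hKq
      simp only [hφdef]
      rw [hzt q, hKq]
    · intro hφq
      have hyt : tmap q ∈ PH.target := hqt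
      have hHq' : Hfun Θ (K (tmap q)) = tmap q := by rw [← hPHcoe]; exact PH.right_inv hyt
      have h1 : (K (tmap q)).1 = q.1 := by
        simpa [Hfun, htmapdef] using congrArg Prod.fst hHq'
      have h2c : ((Gfun Θ (K (tmap q)) : ℂ) + Complex.I * ((K (tmap q)).2.im : ℂ))
          = Complex.I * (q.2.im : ℂ) := by
        simpa [Hfun, htmapdef] using congrArg Prod.snd hHq'
      have hGz : Gfun Θ (K (tmap q)) = 0 := by
        have := congrArg Complex.re h2c
        simpa using this
      have him : (K (tmap q)).2.im = q.2.im := by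
        have := congrArg Complex.im h2c
        simpa using this
      have hre : (K (tmap q)).2.re = q.2.re := by
        rw [hφq]
        simp only [hφdef]
        rw [hzt q]
      have hKyq : K (tmap q) = q := Prod.ext h1 (Complex.ext hre him)
      rw [hKyq] at hGz
      exact hGz
  -- derivative of φ vanishes
  have hφd : DifferentiableAt ℝ φ 0 := hφa.differentiableAt
  set Λ : (Fin n → ℝ) × (Fin n → ℝ) × ℝ → Esp n :=
    fun t => zmap n t + ((0 : Fin n → ℂ), ((φ t : ℝ) : ℂ)) with hΛdef
  have hΛ0 : Λ 0 = 0 := by simp [hΛdef, hφ0]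
  have hΛc : ContinuousAt Λ 0 := by
    apply ContinuousAt.add ((zmap n).continuous.continuousAt)
    exact continuousAt_const.prodMk
      (Complex.continuous_ofReal.continuousAt.comp hφd.continuousAt)
  have hΛU : ∀ᶠ t in 𝓝 0, Λ t ∈ U := by
    have hU0' : U ∈ 𝓝 (Λ 0) := by rw [hΛ0]; exact hUopen.mem_nhds hU0
    exact hΛc hU0'
  have hGΛ : ∀ᶠ t in 𝓝 0, Gfun Θ (Λ t) = 0 := by
    filter_upwards [hΛU] with t htU
    apply (hgraph (Λ t) htU).2
    have hx : ((fun k => ((Λ t).1 k).re, fun k => ((Λ t).1 k).im, (Λ t).2.im) :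
        (Fin n → ℝ) × (Fin n → ℝ) × ℝ) = t := by
      refine Prod.ext ?_ (Prod.ext ?_ ?_)
      · funext k; simp [hΛdef, zmap_apply]
      · funext k; simp [hΛdef, zmap_apply]
      · simp [hΛdef, zmap_apply]
    rw [hx]
    show (Λ t).2.re = φ t
    simp [hΛdef, zmap_apply]
  have hfd0 : fderiv ℝ (fun t => Gfun Θ (Λ t)) 0 = 0 := by
    have hev : (fun t => Gfun Θ (Λ t)) =ᶠ[𝓝 0] (fun _ => (0 : ℝ)) := hGΛ
    rw [hev.fderiv_eq]
    exact fderiv_const_apply 0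
  set LΛ : ((Fin n → ℝ) × (Fin n → ℝ) × ℝ) →L[ℝ] Esp n :=
    (zmap n) + ((0 : ((Fin n → ℝ) × (Fin n → ℝ) × ℝ) →L[ℝ] (Fin n → ℂ)).prod
      (Complex.ofRealCLM.comp (fderiv ℝ φ 0))) with hLΛdef
  have hΛd : HasFDerivAt Λ LΛ 0 := by
    apply ((zmap n).hasFDerivAt).add
    exact (hasFDerivAt_const (0 : Fin n → ℂ) 0).prodMk
      ((Complex.ofRealCLM.hasFDerivAt).comp 0 hφd.hasFDerivAt)
  have hcomp : HasFDerivAt (fun t => Gfun Θ (Λ t)) ((DGm Θ).comp LΛ) 0 := by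
    have hg : HasFDerivAt (Gfun Θ) (DGm Θ) (Λ 0) := by
      rw [hΛ0]; exact gfun_hasFDerivAt hΘ
    exact hg.comp 0 hΛd
  have hDL : (DGm Θ).comp LΛ = 0 := by
    rw [← hcomp.fderiv]
    exact hfd0
  have hφfd : fderiv ℝ φ 0 = 0 := by
    apply ContinuousLinearMap.ext
    intro d
    have h := ContinuousLinearMap.ext_iff.mp hDL d
    simp only [ContinuousLinearMap.comp_apply, ContinuousLinearMap.zero_apply] at h
    have h2s : (LΛ d).2 = Complex.I * (d.2.2 : ℂ) + ((fderiv ℝ φ 0 d : ℝ) : ℂ) := by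
      simp [hLΛdef, zmap_apply]
    have hD : DGm Θ (LΛ d) = ((LΛ d).2 + (starRingEnd ℂ) (LΛ d).2).re := by
      simp [DGm, Drho_apply h2']
    rw [hD, h2s] at h
    simp at h
    simpa using h
  refine ⟨U, hUopen, hU0, by rw [hMM], φ, hφa, hφ0, hφfd, ?_⟩
  ext q
  simp only [mem_inter_iff, mem_setOf_eq]
  constructor
  · rintro ⟨hM, hqU⟩
    refine ⟨?_, hqU⟩
    have hρ : rho Θ q = 0 := (hMset q).1 hM
    have hG : Gfun Θ q = 0 := by simp [Gfun, hρ]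
    exact (hgraph q hqU).1 hG
  · rintro ⟨hg, hqU⟩
    refine ⟨?_, hqU⟩
    have hG := (hgraph q hqU).2 hg
    have hρ : rho Θ q = 0 := hVP hqU.1.2 hG
    exact (hMset q).2 hρ
end
end

section
/- Let K = ℝ or ℂ, n ≥ 2, and let Q = Q(x, a) be K-analytic near 0 in Kⁿ×K^{n+1} (a = (a¹,…,a^{n+1})). Then for all μ, ν ∈ {1,…,n+1} and all ℓ ∈ {1,…,n}, the following identity holds identically near 0: □ · ∂/∂a^μ(□^ν_{[0_{1+ℓ}]}) − □^ν_{[0_{1+ℓ}]} · ∂/∂a^μ(□) = − Σ_{τ=1}^{n+1} □^τ_{[0_{1+ℓ}]} · □^ν_{[a^τ a^μ]}. -/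
open Topology Filter Set

noncomputable section

/-- The space Kⁿ × K^{n+1} of variables (x, a) = (x¹,…,xⁿ, a¹,…,a^{n+1}). -/
abbrev QPt (K : Type*) (n : ℕ) := (Fin n → K) × (Fin (n + 1) → K)

/-- The first-order jet space Kⁿ × K × Kⁿ of variables (x, y, λ), λ_k = y_{x^k}. -/
abbrev JPt (K : Type*) (n : ℕ) := (Fin n → K) × K × (Fin n → K)

variable {K : Type*} [RCLike K] {n : ℕ}

/-- Partial derivative ∂/∂x^k on (x,a)-space. -/
def pdX (k : Fin n) (Q : QPt K n → K) : QPt K n → K :=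
  fun p => fderiv K Q p (Pi.single k 1, 0)

/-- Partial derivative ∂/∂a^μ on (x,a)-space. -/
def pdA (μ : Fin (n + 1)) (Q : QPt K n → K) : QPt K n → K :=
  fun p => fderiv K Q p (0, Pi.single μ 1)

/-- Partial derivative ∂/∂λ_ℓ on the jet space (x,y,λ). -/
def pdL (ℓ : Fin n) (G : JPt K n → K) : JPt K n → K :=
  fun p => fderiv K G p (0, 0, Pi.single ℓ 1)

/-- The (n+1)×(n+1) matrix whose first row is (Q_{a^μ})_μ and whose (1+k)-th row is
(Q_{x^k a^μ})_μ; its determinant is □. -/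
def SqMat (Q : QPt K n → K) (p : QPt K n) : Matrix (Fin (n + 1)) (Fin (n + 1)) K :=
  Matrix.of fun i μ =>
    Fin.cons (α := fun _ => K) (pdA μ Q p) (fun k : Fin n => pdA μ (pdX k Q) p) i

/-- The Jacobian-like determinant □. -/
def Sq (Q : QPt K n → K) (p : QPt K n) : K := (SqMat Q p).det

/-- □^μ_{[0_{1+ℓ}]} : □ with its μ-th column replaced by the standard basis column
with 1 in the (1+ℓ)-th entry. -/
def SqCol (Q : QPt K n → K) (ℓ : Fin n) (μ : Fin (n + 1)) (p : QPt K n) : K :=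
  ((SqMat Q p).updateCol μ (Pi.single ℓ.succ 1)).det

/-- □^ν_{[a^μ a^τ]} : □ with its ν-th column replaced by
(Q_{a^μ a^τ}, Q_{x¹ a^μ a^τ}, …, Q_{xⁿ a^μ a^τ})ᵀ. -/
def SqAA (Q : QPt K n → K) (μ τ : Fin (n + 1)) (ν : Fin (n + 1)) (p : QPt K n) : K :=
  ((SqMat Q p).updateCol ν
    (Fin.cons (α := fun _ => K) (pdA τ (pdA μ Q) p)
      (fun k : Fin n => pdA τ (pdA μ (pdX k Q)) p))).det

/-- The base point (0, Q(0,0), Q_{x¹}(0,0), …, Q_{xⁿ}(0,0)) in the jet space. -/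
def basePt (Q : QPt K n → K) : JPt K n :=
  ((0 : Fin n → K), Q 0, fun k => pdX k Q 0)

section AuxLemmas

open Matrix Finset

variable {R : Type*} [CommRing R] {d : ℕ}

variable {R : Type*} [CommRing R] {d : ℕ}

lemma myMul_updateColumn (M B : Matrix (Fin d) (Fin d) R) (τ : Fin d) (w : Fin d → R) :
    M * (B.updateCol τ w) = (M * B).updateCol τ (M *ᵥ w) := by
  ext i j
  by_cases h : j = τ <;>
    simp [Matrix.mul_apply, Matrix.updateCol_apply, h, Matrix.mulVec, dotProduct]

lemma det_one_updateColumn (ν : Fin d) (u : Fin d → R) :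
    ((1 : Matrix (Fin d) (Fin d) R).updateCol ν u).det = u ν := by
  rw [← Matrix.cramer_apply, Matrix.cramer_one]
  rfl

lemma det_one_two {τ ν : Fin d} (hτν : τ ≠ ν) (u w : Fin d → R) :
    ((((1 : Matrix (Fin d) (Fin d) R).updateCol ν u)).updateCol τ w).det
      = u ν * w τ - u τ * w ν := by
  set B : Matrix (Fin d) (Fin d) R := (1 : Matrix (Fin d) (Fin d) R).updateCol ν u with hB
  have hcase : ∀ s : Fin d, (B.updateCol τ (Pi.single s 1)).det
      = if s = τ then u ν else if s = ν then -(u τ) else 0 := by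
    intro s
    by_cases hsτ : s = τ
    · subst hsτ
      have : B.updateCol s (Pi.single s 1) = B := by
        ext i j
        by_cases hj : j = s
        · subst hj
          simp [hB, Matrix.updateCol_apply, Ne.symm, hτν, Matrix.one_apply, Pi.single_apply,
            eq_comm]
        · simp [Matrix.updateCol_apply, hj]
      rw [this, if_pos rfl, hB, det_one_updateColumn]
    · by_cases hsν : s = ν
      · subst hsν
        have hswap : B.updateCol τ (Pi.single s 1)
            = (((1 : Matrix (Fin d) (Fin d) R).updateCol τ u).submatrix id (Equiv.swap s τ)) := by
          ext i j
          rcases eq_or_ne j s with rfl | hjs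
          · simp [Equiv.swap_apply_left, hB, Matrix.updateCol_apply, Ne.symm hτν,
              (hsτ : j ≠ τ)]
          · rcases eq_or_ne j τ with rfl | hjτ
            · simp [Equiv.swap_apply_right, Matrix.updateCol_apply, hsτ, Matrix.one_apply,
                Pi.single_apply, eq_comm]
            · simp [Equiv.swap_apply_of_ne_of_ne hjs hjτ, hB, Matrix.updateCol_apply, hjτ,
                hjs]
        rw [hswap, Matrix.det_permute', Equiv.Perm.sign_swap hsτ, if_neg hsτ, if_pos rfl,
          det_one_updateColumn]
        simp
      · rw [if_neg hsτ, if_neg hsν]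
        apply Matrix.det_zero_of_column_eq (Ne.symm hsτ)
        intro k
        simp [Matrix.updateCol_apply, hsτ, hsν, hB, Matrix.one_apply, Pi.single_apply, eq_comm]
  have hw : w = ∑ s : Fin d, Pi.single s (w s) := by
    simp [Finset.univ_sum_single]
  calc (B.updateCol τ w).det = Matrix.cramer B w τ := (Matrix.cramer_apply _ _ _).symm
    _ = ∑ s : Fin d, (w s) * Matrix.cramer B (Pi.single s 1) τ := by
        conv_lhs => rw [hw]
        rw [map_sum]
        simp only [Finset.sum_apply]
        congr 1
        ext s
        have h1 : Pi.single s (w s) = (w s) • (Pi.single s (1 : R) : Fin d → R) := by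
          ext j
          rcases eq_or_ne j s with rfl | hj
          · simp
          · simp [Pi.single_eq_of_ne hj]
        rw [h1, LinearMap.map_smul]
        simp
    _ = ∑ s : Fin d, (w s) * (if s = τ then u ν else if s = ν then -(u τ) else 0) := by
        refine Finset.sum_congr rfl fun s _ => ?_
        rw [Matrix.cramer_apply, hcase]
    _ = ∑ s : Fin d, ((if s = τ then w s * u ν else 0) + (if s = ν then -(w s * u τ) else 0)) := by
        refine Finset.sum_congr rfl fun s _ => ?_
        split_ifs with h1 h2
        · exact absurd (h1 ▸ h2) hτν
        all_goals ring
    _ = u ν * w τ - u τ * w ν := by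
        rw [Finset.sum_add_distrib, Finset.sum_ite_eq' Finset.univ τ, Finset.sum_ite_eq'
          Finset.univ ν]
        simp [mul_comm]
        ring

lemma star_invertible (M : Matrix (Fin d) (Fin d) R) (hM : IsUnit M.det)
    {ν τ : Fin d} (hτν : τ ≠ ν) (e v : Fin d → R) :
    M.det * ((M.updateCol ν e).updateCol τ v).det
      = (M.updateCol ν e).det * (M.updateCol τ v).det
        - (M.updateCol τ e).det * (M.updateCol ν v).det := by
  set u : Fin d → R := M⁻¹ *ᵥ e with hu
  set w : Fin d → R := M⁻¹ *ᵥ v with hw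
  have he : M *ᵥ u = e := by
    rw [hu, Matrix.mulVec_mulVec, Matrix.mul_nonsing_inv _ hM, Matrix.one_mulVec]
  have hv : M *ᵥ w = v := by
    rw [hw, Matrix.mulVec_mulVec, Matrix.mul_nonsing_inv _ hM, Matrix.one_mulVec]
  have h1 : ∀ (σ : Fin d) (z : Fin d → R),
      M.updateCol σ (M *ᵥ z) = M * ((1 : Matrix (Fin d) (Fin d) R).updateCol σ z) := by
    intro σ z
    rw [myMul_updateColumn, mul_one]
  have h2 : (M.updateCol ν e).updateCol τ v
      = M * (((1 : Matrix (Fin d) (Fin d) R).updateCol ν u).updateCol τ w) := by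
    rw [myMul_updateColumn, ← h1, he, hv]
  rw [h2, ← he, ← hv]
  simp only [h1]
  simp only [Matrix.det_mul, det_one_updateColumn, det_one_two hτν]
  ring


lemma det_add_smul_one_eq_eval (M : Matrix (Fin d) (Fin d) K) (t : K) :
    (M + t • (1 : Matrix (Fin d) (Fin d) K)).det = ((-M).charpoly).eval t := by
  rw [Matrix.charpoly, Polynomial.eval, ← Polynomial.coe_eval₂RingHom, RingHom.map_det]
  congr 1
  ext i j
  rcases eq_or_ne i j with rfl | hij
  · simp [Matrix.charmatrix_apply_eq, Matrix.add_apply, Matrix.smul_apply, Matrix.one_apply,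
      add_comm]
  · simp [Matrix.charmatrix_apply_ne _ _ _ hij, Matrix.add_apply, Matrix.smul_apply,
      Matrix.one_apply_ne hij]

lemma star_all (M : Matrix (Fin d) (Fin d) K) {ν τ : Fin d} (hτν : τ ≠ ν) (e v : Fin d → K) :
    M.det * ((M.updateCol ν e).updateCol τ v).det
      = (M.updateCol ν e).det * (M.updateCol τ v).det
        - (M.updateCol τ e).det * (M.updateCol ν v).det := by
  set F : Matrix (Fin d) (Fin d) K → K := fun A =>
    A.det * ((A.updateCol ν e).updateCol τ v).det
      - ((A.updateCol ν e).det * (A.updateCol τ v).det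
        - (A.updateCol τ e).det * (A.updateCol ν v).det) with hF
  have hFcont : Continuous F := by
    apply Continuous.sub
    · exact (continuous_id.matrix_det).mul
        (((continuous_id.matrix_updateCol ν continuous_const).matrix_updateCol τ
          continuous_const).matrix_det)
    · exact Continuous.sub
        (((continuous_id.matrix_updateCol ν continuous_const).matrix_det).mul
          ((continuous_id.matrix_updateCol τ continuous_const).matrix_det))
        (((continuous_id.matrix_updateCol τ continuous_const).matrix_det).mul
          ((continuous_id.matrix_updateCol ν continuous_const).matrix_det))
  set g : K → K := fun t => F (M + t • 1) with hg
  have hgcont : Continuous g := hFcont.comp (by continuity)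
  have hZfin : {t : K | ((-M).charpoly).IsRoot t}.Finite :=
    Polynomial.finite_setOf_isRoot (Matrix.charpoly_monic _).ne_zero
  have hkey : ∀ t : K, ¬ ((-M).charpoly).IsRoot t → g t = 0 := by
    intro t ht
    have hM : IsUnit (M + t • (1 : Matrix (Fin d) (Fin d) K)).det := by
      rw [isUnit_iff_ne_zero, det_add_smul_one_eq_eval]
      exact ht
    have := star_invertible (M + t • (1 : Matrix (Fin d) (Fin d) K)) hM hτν e v
    simp only [hg, hF]
    rw [this]
    ring
  have hmem : ({t : K | ((-M).charpoly).IsRoot t} \ {0})ᶜ ∈ 𝓝 (0 : K) := by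
    refine ((hZfin.subset Set.diff_subset).isClosed.isOpen_compl).mem_nhds ?_
    simp
  have hev : ∀ᶠ t in 𝓝[≠] (0 : K), g t = 0 := by
    filter_upwards [mem_nhdsWithin_of_mem_nhds hmem, self_mem_nhdsWithin] with t ht hne
    refine hkey t fun hroot => ht ⟨hroot, hne⟩
  have h0 : g 0 = 0 := by
    have h1 : Tendsto g (𝓝[≠] (0 : K)) (𝓝 (g 0)) :=
      (hgcont.tendsto 0).mono_left nhdsWithin_le_nhds
    have h2 : Tendsto g (𝓝[≠] (0 : K)) (𝓝 (0 : K)) :=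
      Tendsto.congr' (Filter.EventuallyEq.symm hev) tendsto_const_nhds
    exact tendsto_nhds_unique h1 h2
  have : F M = 0 := by
    have : M + (0 : K) • (1 : Matrix (Fin d) (Fin d) K) = M := by simp
    rw [← this]
    exact h0
  simp only [hF] at this
  exact sub_eq_zero.mp this

lemma key_identity (M B : Matrix (Fin d) (Fin d) K) (e : Fin d → K) (ν : Fin d) :
    M.det * (∑ τ : Fin d, ((M.updateCol ν e).updateCol τ
        (fun i => if τ = ν then 0 else B i τ)).det)
      - (M.updateCol ν e).det * (∑ τ : Fin d, (M.updateCol τ (fun i => B i τ)).det)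
      = -∑ τ : Fin d, (M.updateCol τ e).det * (M.updateCol ν (fun i => B i τ)).det := by
  rw [Finset.mul_sum, Finset.mul_sum, ← Finset.sum_sub_distrib, ← Finset.sum_neg_distrib]
  refine Finset.sum_congr rfl fun τ _ => ?_
  rcases eq_or_ne τ ν with rfl | hτν
  · have hz : ((M.updateCol τ e).updateCol τ
        (fun i => if τ = τ then (0 : K) else B i τ)).det = 0 := by
      apply Matrix.det_eq_zero_of_column_eq_zero τ
      intro i
      simp
    rw [hz]
    ring
  · have hc : (fun i => if τ = ν then (0 : K) else B i τ) = fun i => B i τ := by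
      funext i; simp [hτν]
    rw [hc]
    linear_combination star_all M hτν e (fun i => B i τ)

variable {E : Type*} [NormedAddCommGroup E] [NormedSpace K E]

lemma fderiv_det_apply (m : E → Matrix (Fin d) (Fin d) K) (p : E)
    (h : ∀ i j, DifferentiableAt K (fun q => m q i j) p) (w : E) :
    fderiv K (fun q => (m q).det) p w
      = ∑ τ : Fin d, ((m p).updateCol τ
          (fun i => fderiv K (fun q => m q i τ) p w)).det := by
  classical
  have hder : HasFDerivAt (fun q => (m q).det)
      (∑ σ : Equiv.Perm (Fin d), ((Equiv.Perm.sign σ : ℤ) : K) •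
        ∑ τ : Fin d, (∏ j ∈ Finset.univ.erase τ, m p (σ j) j) •
          fderiv K (fun q => m q (σ τ) τ) p) p := by
    have hdet : (fun q => (m q).det) = fun q =>
        ∑ σ : Equiv.Perm (Fin d), ((Equiv.Perm.sign σ : ℤ) : K) * ∏ i : Fin d, m q (σ i) i := by
      funext q
      rw [Matrix.det_apply]
      refine Finset.sum_congr rfl fun σ _ => ?_
      rw [Units.smul_def, zsmul_eq_mul]
    rw [hdet]
    apply HasFDerivAt.fun_sum
    intro σ _
    exact (HasFDerivAt.finset_prod (fun i _ => (h (σ i) i).hasFDerivAt)).const_mul _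
  have hRHS : ∀ τ : Fin d, ((m p).updateCol τ
        (fun i => fderiv K (fun q => m q i τ) p w)).det
      = ∑ σ : Equiv.Perm (Fin d), ((Equiv.Perm.sign σ : ℤ) : K) *
          (fderiv K (fun q => m q (σ τ) τ) p w * ∏ j ∈ Finset.univ.erase τ, m p (σ j) j) := by
    intro τ
    rw [Matrix.det_apply]
    refine Finset.sum_congr rfl fun σ _ => ?_
    rw [Units.smul_def, zsmul_eq_mul]
    congr 1
    rw [← Finset.mul_prod_erase Finset.univ _ (Finset.mem_univ τ)]
    congr 1
    · simp
    · refine Finset.prod_congr rfl fun j hj => ?_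
      have hjτ : j ≠ τ := Finset.ne_of_mem_erase hj
      simp [Matrix.updateCol_apply, hjτ]
  rw [hder.fderiv]
  simp only [ContinuousLinearMap.coe_sum', Finset.sum_apply, ContinuousLinearMap.coe_smul',
    Pi.smul_apply, smul_eq_mul, hRHS]
  rw [Finset.sum_comm]
  refine Finset.sum_congr rfl fun σ _ => ?_
  rw [Finset.mul_sum]
  refine Finset.sum_congr rfl fun τ _ => ?_
  ring

end AuxLemmas

/-- the determinantal identity
□·∂_{a^μ}(□^ν_{[0_{1+ℓ}]}) − □^ν_{[0_{1+ℓ}]}·∂_{a^μ}(□) = −Σ_τ □^τ_{[0_{1+ℓ}]}·□^ν_{[a^τ a^μ]},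
holding identically near the origin. -/
theorem square_determinant_derivative_identity {K : Type*} [RCLike K] {n : ℕ}
    (hn : 2 ≤ n) (Q : QPt K n → K) (hQ : AnalyticAt K Q 0) :
    ∀ (μ ν : Fin (n + 1)) (ℓ : Fin n), ∀ᶠ p in 𝓝 (0 : QPt K n),
      Sq Q p * pdA μ (SqCol Q ℓ ν) p - SqCol Q ℓ ν p * pdA μ (Sq Q) p =
        -∑ τ : Fin (n + 1), SqCol Q ℓ τ p * SqAA Q τ μ ν p := by
  intro μ ν ℓ
  filter_upwards [hQ.eventually_analyticAt] with p hp
  classical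
  set g : Fin (n + 1) → (QPt K n → K) := Fin.cons Q (fun k => pdX k Q) with hgdef
  have hganal : ∀ i, AnalyticAt K (g i) p := by
    intro i
    induction i using Fin.cases with
    | zero => simpa [hgdef] using hp
    | succ k =>
      simp only [hgdef, Fin.cons_succ]
      exact ((ContinuousLinearMap.apply K K
        ((Pi.single k 1 : Fin n → K), (0 : Fin (n + 1) → K))).analyticAt _).comp hp.fderiv
  have hentry : ∀ (i τ : Fin (n + 1)), (fun q => SqMat Q q i τ) = pdA τ (g i) := by
    intro i τ
    funext q
    induction i using Fin.cases with
    | zero => simp [SqMat, hgdef]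
    | succ k => simp [SqMat, hgdef]
  have hentry_anal : ∀ i τ, AnalyticAt K (fun q => SqMat Q q i τ) p := by
    intro i τ
    rw [hentry]
    exact ((ContinuousLinearMap.apply K K
      ((0 : Fin n → K), Pi.single τ 1)).analyticAt _).comp (hganal i).fderiv
  set w₀ : QPt K n := ((0 : Fin n → K), Pi.single μ 1) with hw₀
  set M := SqMat Q p with hMdef
  set B : Matrix (Fin (n + 1)) (Fin (n + 1)) K :=
    Matrix.of fun i τ => pdA μ (pdA τ (g i)) p with hBdef
  set c : Fin (n + 1) → K := Pi.single ℓ.succ 1 with hc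
  have hSq : pdA μ (Sq Q) p = ∑ τ, (M.updateCol τ (fun i => B i τ)).det := by
    have h1 := fderiv_det_apply (fun q => SqMat Q q) p
      (fun i j => (hentry_anal i j).differentiableAt) w₀
    have h2 : pdA μ (Sq Q) p = fderiv K (fun q => (SqMat Q q).det) p w₀ := rfl
    rw [h2, h1]
    refine Finset.sum_congr rfl fun τ _ => ?_
    have hv : (fun i => (fderiv K (fun q => SqMat Q q i τ) p) w₀) = (fun i => B i τ) := by
      funext i
      rw [hentry]
      rfl
    rw [← hMdef, hv]
  have hSqCol : pdA μ (SqCol Q ℓ ν) p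
      = ∑ τ, ((M.updateCol ν c).updateCol τ
          (fun i => if τ = ν then 0 else B i τ)).det := by
    have hdiff : ∀ i j, DifferentiableAt K
        (fun q => ((SqMat Q q).updateCol ν c) i j) p := by
      intro i j
      rcases eq_or_ne j ν with rfl | hj
      · have he : (fun q => ((SqMat Q q).updateCol j c) i j) = fun _ => c i := by
          funext q; simp
        rw [he]; exact differentiableAt_const _
      · have he : (fun q => ((SqMat Q q).updateCol ν c) i j) = fun q => SqMat Q q i j := by
          funext q; simp [Matrix.updateCol_apply, hj]
        rw [he]; exact (hentry_anal i j).differentiableAt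
    have h1 := fderiv_det_apply (fun q => (SqMat Q q).updateCol ν c) p hdiff w₀
    have h2 : pdA μ (SqCol Q ℓ ν) p
        = fderiv K (fun q => ((SqMat Q q).updateCol ν c).det) p w₀ := rfl
    rw [h2, h1]
    refine Finset.sum_congr rfl fun τ _ => ?_
    have hv : (fun i => (fderiv K (fun q => ((SqMat Q q).updateCol ν c) i τ) p) w₀)
        = (fun i => if τ = ν then (0 : K) else B i τ) := by
      funext i
      by_cases hτ : τ = ν
      · subst hτ
        have he : (fun q => ((SqMat Q q).updateCol τ c) i τ) = fun _ => c i := by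
          funext q; simp
        rw [he, if_pos rfl, fderiv_fun_const]
        simp
      · rw [if_neg hτ]
        have he : (fun q => ((SqMat Q q).updateCol ν c) i τ) = fun q => SqMat Q q i τ := by
          funext q; simp [Matrix.updateCol_apply, hτ]
        rw [he, hentry]
        rfl
    rw [← hMdef, hv]
  have hSqAA : ∀ τ, SqAA Q τ μ ν p = (M.updateCol ν (fun i => B i τ)).det := by
    intro τ
    unfold SqAA
    have hv : (Fin.cons (α := fun _ => K) (pdA μ (pdA τ Q) p)
        (fun k : Fin n => pdA μ (pdA τ (pdX k Q)) p)) = (fun i => B i τ) := by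
      funext i
      induction i using Fin.cases with
      | zero => simp [hBdef, hgdef]
      | succ k => simp [hBdef, hgdef]
    rw [← hMdef, hv]
  have hSqColv : ∀ τ, SqCol Q ℓ τ p = (M.updateCol τ c).det := fun τ => rfl
  have hSqv : Sq Q p = M.det := rfl
  rw [hSq, hSqCol, hSqv, hSqColv ν]
  simp only [hSqColv, hSqAA]
  exact key_identity M B c ν
end
end

section
/- Let K = ℝ or ℂ, n ≥ 2, let Q = Q(x, a) be K-analytic near 0 in Kⁿ×K^{n+1} with □(0,0) ≠ 0, and let A = (A¹,…,A^{n+1}) be the K-analytic implicit functions of (x,y,λ) satisfying y ≡ Q(x, A(x,y,λ)) and λ_k ≡ Q_{x^k}(x, A(x,y,λ)) for k = 1,…,n. Let T = T(x,a) be any K-analytic function near 0 and set G(x,y,λ) := T(x, A(x,y,λ)). Then for all ℓ₁, ℓ₂ ∈ {1,…,n}, identically near the base point: ∂²G/∂λ_{ℓ₁}∂λ_{ℓ₂} = (1/□³) Σ_{μ=1}^{n+1} Σ_{ν=1}^{n+1} □^μ_{[0_{1+ℓ₁}]} · □^ν_{[0_{1+ℓ₂}]} · { □ · ∂²T/∂a^μ∂a^ν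 − Σ_{τ=1}^{n+1} □^τ_{[a^μ a^ν]} · ∂T/∂a^τ }, where all quantities □, □^μ_{[0_{1+ℓ}]}, □^τ_{[a^μ a^ν]} and the partial derivatives of T on the right-hand side are evaluated at (x, A(x,y,λ)). -/
open Topology Filter Set

noncomputable section

variable {K : Type*} [RCLike K] {n : ℕ}

section AuxLemmas

variable {K : Type*} [RCLike K] {n : ℕ}

lemma pdA_analyticAt {f : QPt K n → K} {q : QPt K n} (hf : AnalyticAt K f q) (μ : Fin (n + 1)) :
    AnalyticAt K (pdA μ f) q :=
  ((ContinuousLinearMap.apply K K (((0, Pi.single μ 1)) : QPt K n)).analyticAt _).comp hf.fderiv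

lemma pdX_analyticAt {f : QPt K n → K} {q : QPt K n} (hf : AnalyticAt K f q) (k : Fin n) :
    AnalyticAt K (pdX k f) q :=
  ((ContinuousLinearMap.apply K K (((Pi.single k 1, 0)) : QPt K n)).analyticAt _).comp hf.fderiv

lemma fderiv_apply_snd {f : QPt K n → K} {q : QPt K n} (hf : DifferentiableAt K f q)
    (w : Fin (n + 1) → K) :
    fderiv K f q ((0 : Fin n → K), w) = ∑ μ, w μ * pdA μ f q := by
  have hw : (((0 : Fin n → K), w) : QPt K n)
      = ∑ μ, w μ • (((0 : Fin n → K), Pi.single μ 1) : QPt K n) := by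
    rw [Prod.ext_iff]
    constructor
    · rw [Prod.fst_sum]; simp
    · rw [Prod.snd_sum]
      funext j
      simp [Finset.sum_apply, Pi.single_apply]
  rw [hw, map_sum]
  refine Finset.sum_congr rfl fun μ _ => ?_
  rw [map_smul]
  simp [pdA, smul_eq_mul]

lemma fderiv_comp_phi {A : JPt K n → Fin (n + 1) → K} {p : JPt K n}
    (hA : DifferentiableAt K A p) {f : QPt K n → K}
    (hf : DifferentiableAt K f (p.1, A p)) (v : JPt K n) (hv : v.1 = 0) :
    fderiv K (fun q => f (q.1, A q)) p v
      = ∑ μ, fderiv K A p v μ * pdA μ f (p.1, A p) := by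
  have hφ : HasFDerivAt (fun q : JPt K n => ((q.1, A q) : QPt K n))
      ((ContinuousLinearMap.fst K (Fin n → K) (K × (Fin n → K))).prod (fderiv K A p)) p :=
    HasFDerivAt.prodMk hasFDerivAt_fst hA.hasFDerivAt
  have hcomp : HasFDerivAt (fun q : JPt K n => f (q.1, A q))
      ((fderiv K f (p.1, A p)).comp
        ((ContinuousLinearMap.fst K (Fin n → K) (K × (Fin n → K))).prod (fderiv K A p))) p :=
    hf.hasFDerivAt.comp p hφ
  rw [hcomp.fderiv]
  have : fderiv K f (p.1, A p) (v.1, fderiv K A p v)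
      = ∑ μ, fderiv K A p v μ * pdA μ f (p.1, A p) := by
    rw [hv]; exact fderiv_apply_snd hf _
  exact this

lemma pdA_pdA_eq_snd_fderiv {f : QPt K n → K} {q : QPt K n} (hf : AnalyticAt K f q)
    (μ ν : Fin (n + 1)) :
    pdA ν (pdA μ f) q
      = fderiv K (fderiv K f) q ((0, Pi.single ν 1) : QPt K n) ((0, Pi.single μ 1) : QPt K n) := by
  have h1 : DifferentiableAt K (fderiv K f) q := hf.fderiv.differentiableAt
  have h2 : pdA ν (pdA μ f) q
      = fderiv K (fun p => fderiv K f p (((0, Pi.single μ 1)) : QPt K n)) q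
          ((0, Pi.single ν 1) : QPt K n) := rfl
  rw [h2, fderiv_clm_apply h1 (differentiableAt_const _)]
  simp

lemma pdA_comm {f : QPt K n → K} {q : QPt K n} (hf : AnalyticAt K f q) (μ ν : Fin (n + 1)) :
    pdA ν (pdA μ f) q = pdA μ (pdA ν f) q := by
  rw [pdA_pdA_eq_snd_fderiv hf, pdA_pdA_eq_snd_fderiv hf]
  exact (hf.contDiffAt (n := ⊤)).isSymmSndFDerivAt le_top _ _

lemma det_mul_of_mulVec {M : Matrix (Fin (n + 1)) (Fin (n + 1)) K} {x b : Fin (n + 1) → K}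
    (h : Matrix.mulVec M x = b) (μ : Fin (n + 1)) :
    M.det * x μ = (M.updateCol μ b).det := by
  have h2 : Matrix.cramer M b = M.det • x := by
    rw [← h, Matrix.cramer_eq_adjugate_mulVec, Matrix.mulVec_mulVec, Matrix.adjugate_mul,
      Matrix.smul_mulVec, Matrix.one_mulVec]
  rw [← Matrix.cramer_apply, h2]
  simp

end AuxLemmas

section AuxLemmas2

variable {K : Type*} [RCLike K] {n : ℕ}

/-- The (i,μ)-entry of `SqMat Q` as a function of the point. -/
def entryFun (Q : QPt K n → K) (i μ : Fin (n + 1)) : QPt K n → K :=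
  Fin.cons (α := fun _ => QPt K n → K) (pdA μ Q) (fun k => pdA μ (pdX k Q)) i

lemma sqMat_apply (Q : QPt K n → K) (q : QPt K n) (i μ : Fin (n + 1)) :
    SqMat Q q i μ = entryFun Q i μ q := by
  refine Fin.cases ?_ (fun k => ?_) i <;> simp [SqMat, entryFun]

lemma entryFun_analyticAt {Q : QPt K n → K} {q : QPt K n} (hQ : AnalyticAt K Q q)
    (i μ : Fin (n + 1)) : AnalyticAt K (entryFun Q i μ) q := by
  refine Fin.cases ?_ (fun k => ?_) i
  · simpa [entryFun] using pdA_analyticAt hQ μ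
  · simpa [entryFun] using pdA_analyticAt (pdX_analyticAt hQ k) μ

/-- The column vector of second `a`-derivatives appearing in `SqAA`. -/
def AACol (Q : QPt K n → K) (μ ν : Fin (n + 1)) (q : QPt K n) : Fin (n + 1) → K :=
  Fin.cons (α := fun _ => K) (pdA ν (pdA μ Q) q) (fun k => pdA ν (pdA μ (pdX k Q)) q)

lemma pdA_entryFun (Q : QPt K n → K) (q : QPt K n) (i μ ν : Fin (n + 1)) :
    pdA ν (entryFun Q i μ) q = AACol Q μ ν q i := by
  refine Fin.cases ?_ (fun k => ?_) i <;> simp [entryFun, AACol]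

lemma sqAA_eq (Q : QPt K n → K) (μ ν σ : Fin (n + 1)) (q : QPt K n) :
    SqAA Q μ ν σ q = ((SqMat Q q).updateCol σ (AACol Q μ ν q)).det := rfl

lemma AACol_symm {Q : QPt K n → K} {q : QPt K n} (hQ : AnalyticAt K Q q) (μ ν : Fin (n + 1)) :
    AACol Q μ ν q = AACol Q ν μ q := by
  funext i
  refine Fin.cases ?_ (fun k => ?_) i
  · simp [AACol, pdA_comm hQ]
  · simp [AACol, pdA_comm (pdX_analyticAt hQ k)]

lemma sqAA_symm {Q : QPt K n → K} {q : QPt K n} (hQ : AnalyticAt K Q q) (μ ν σ : Fin (n + 1)) :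
    SqAA Q μ ν σ q = SqAA Q ν μ σ q := by
  rw [sqAA_eq, sqAA_eq, AACol_symm hQ]

lemma fderiv_proj_y (p v : JPt K n) : fderiv K (fun q : JPt K n => q.2.1) p v = v.2.1 := by
  have h : (fun q : JPt K n => q.2.1)
      = ((ContinuousLinearMap.fst K K (Fin n → K)).comp
          (ContinuousLinearMap.snd K (Fin n → K) (K × (Fin n → K))) : JPt K n →L[K] K) := rfl
  rw [h, ContinuousLinearMap.fderiv]
  rfl

lemma fderiv_proj_lam (k : Fin n) (p v : JPt K n) :
    fderiv K (fun q : JPt K n => q.2.2 k) p v = v.2.2 k := by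
  have h : (fun q : JPt K n => q.2.2 k)
      = ((ContinuousLinearMap.proj k).comp
          ((ContinuousLinearMap.snd K K (Fin n → K)).comp
            (ContinuousLinearMap.snd K (Fin n → K) (K × (Fin n → K)))) : JPt K n →L[K] K) := rfl
  rw [h, ContinuousLinearMap.fderiv]
  rfl

lemma D_analyticAt {A : JPt K n → Fin (n + 1) → K} {p : JPt K n} (hA : AnalyticAt K A p)
    (v : JPt K n) (μ : Fin (n + 1)) :
    AnalyticAt K (fun q => fderiv K A q v μ) p := by
  have h1 : AnalyticAt K (fun q => fderiv K A q v) p :=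
    ((ContinuousLinearMap.apply K (Fin (n + 1) → K) v).analyticAt _).comp hA.fderiv
  exact ((ContinuousLinearMap.proj (R := K) (φ := fun _ : Fin (n + 1) => K) μ).analyticAt _).comp h1

lemma phi_analyticAt {A : JPt K n → Fin (n + 1) → K} {p : JPt K n} (hA : AnalyticAt K A p) :
    AnalyticAt K (fun q : JPt K n => ((q.1, A q) : QPt K n)) p :=
  analyticAt_fst.prod hA

lemma comp_phi_analyticAt {A : JPt K n → Fin (n + 1) → K} {p : JPt K n}
    (hA : AnalyticAt K A p) {f : QPt K n → K} (hf : AnalyticAt K f ((p.1, A p) : QPt K n)) :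
    AnalyticAt K (fun q : JPt K n => f ((q.1, A q) : QPt K n)) p :=
  AnalyticAt.comp (g := f) (f := fun q : JPt K n => ((q.1, A q) : QPt K n)) (x := p)
    hf (phi_analyticAt hA)

lemma mulVec_eq_of_rows {M : Matrix (Fin (n + 1)) (Fin (n + 1)) K} {x b : Fin (n + 1) → K}
    (h : ∀ i, ∑ μ, M i μ * x μ = b i) : Matrix.mulVec M x = b := by
  funext i
  simpa [Matrix.mulVec, dotProduct] using h i

end AuxLemmas2

section AuxAlgebra

variable {K : Type*} [RCLike K] {m : ℕ}

lemma final_algebra {s : K} (hs : s ≠ 0)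
    (c1 c2 t D1 D2 D3 : Fin m → K) (TT : Fin m → Fin m → K) (S : Fin m → Fin m → Fin m → K)
    (h1 : ∀ μ, s * D1 μ = c1 μ) (h2 : ∀ μ, s * D2 μ = c2 μ)
    (h3 : ∀ σ, s * D3 σ = -∑ μ, ∑ ν, D2 μ * D1 ν * S μ ν σ)
    (hTs : ∀ μ ν, TT μ ν = TT ν μ) (hSs : ∀ μ ν σ, S μ ν σ = S ν μ σ) :
    ∑ μ, (t μ * D3 μ + D2 μ * ∑ ν, D1 ν * TT μ ν)
      = (1 / s ^ 3) * ∑ μ, ∑ ν, c1 μ * c2 ν * (s * TT μ ν - ∑ τ, S μ ν τ * t τ) := by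
  rw [eq_comm, one_div, inv_mul_eq_iff_eq_mul₀ (pow_ne_zero _ hs), Finset.mul_sum]
  have key1 : ∀ μ, s ^ 3 * (D2 μ * ∑ ν, D1 ν * TT μ ν)
      = ∑ ν, c1 ν * c2 μ * (s * TT μ ν) := by
    intro μ
    rw [Finset.mul_sum, Finset.mul_sum]
    refine Finset.sum_congr rfl fun ν _ => ?_
    rw [← h1 ν, ← h2 μ]
    ring
  have key2 : ∀ σ, s ^ 3 * (t σ * D3 σ)
      = -∑ a, ∑ b, c2 a * c1 b * S a b σ * t σ := by
    intro σ
    have e : s ^ 3 * (t σ * D3 σ) = s ^ 2 * (s * D3 σ) * t σ := by ring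
    rw [e, h3 σ, mul_neg, neg_mul, Finset.mul_sum, Finset.sum_mul]
    congr 1
    refine Finset.sum_congr rfl fun a _ => ?_
    rw [Finset.mul_sum, Finset.sum_mul]
    refine Finset.sum_congr rfl fun b _ => ?_
    rw [← h1 b, ← h2 a]
    ring
  have eq1 : ∑ μ, ∑ ν, c1 μ * c2 ν * (s * TT μ ν)
      = ∑ μ, ∑ ν, c1 ν * c2 μ * (s * TT μ ν) := by
    rw [Finset.sum_comm]
    exact Finset.sum_congr rfl fun μ _ => Finset.sum_congr rfl fun ν _ => by rw [hTs μ ν]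
  have eq2 : ∑ μ, ∑ ν, ∑ τ, c1 μ * c2 ν * (S μ ν τ * t τ)
      = ∑ σ, ∑ a, ∑ b, c2 a * c1 b * S a b σ * t σ := by
    have step1 : ∑ μ, ∑ ν, ∑ τ, c1 μ * c2 ν * (S μ ν τ * t τ)
        = ∑ a, ∑ b, ∑ τ, c2 a * c1 b * S a b τ * t τ := by
      rw [Finset.sum_comm]
      refine Finset.sum_congr rfl fun a _ => Finset.sum_congr rfl fun b _ =>
        Finset.sum_congr rfl fun τ _ => ?_
      rw [hSs b a τ]
      ring
    have step2 : ∑ a, ∑ b, ∑ τ, c2 a * c1 b * S a b τ * t τ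
        = ∑ σ, ∑ a, ∑ b, c2 a * c1 b * S a b σ * t σ := by
      have inner : ∀ a : Fin m, ∑ b, ∑ τ, c2 a * c1 b * S a b τ * t τ
          = ∑ τ, ∑ b, c2 a * c1 b * S a b τ * t τ := fun a => Finset.sum_comm
      rw [Finset.sum_congr rfl fun a _ => inner a, Finset.sum_comm]
    rw [step1, step2]
  calc
    ∑ μ, ∑ ν, c1 μ * c2 ν * (s * TT μ ν - ∑ τ, S μ ν τ * t τ)
        = (∑ μ, ∑ ν, c1 μ * c2 ν * (s * TT μ ν))
          - ∑ μ, ∑ ν, ∑ τ, c1 μ * c2 ν * (S μ ν τ * t τ) := by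
          rw [← Finset.sum_sub_distrib]
          refine Finset.sum_congr rfl fun μ _ => ?_
          rw [← Finset.sum_sub_distrib]
          refine Finset.sum_congr rfl fun ν _ => ?_
          rw [mul_sub, Finset.mul_sum]
    _ = (∑ μ, ∑ ν, c1 ν * c2 μ * (s * TT μ ν))
          - ∑ σ, ∑ a, ∑ b, c2 a * c1 b * S a b σ * t σ := by rw [eq1, eq2]
    _ = ∑ μ, ((∑ ν, c1 ν * c2 μ * (s * TT μ ν)) - ∑ a, ∑ b, c2 a * c1 b * S a b μ * t μ) := by
          rw [Finset.sum_sub_distrib]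
    _ = ∑ μ, s ^ 3 * (t μ * D3 μ + D2 μ * ∑ ν, D1 ν * TT μ ν) := by
          refine Finset.sum_congr rfl fun μ _ => ?_
          rw [mul_add, key1 μ, key2 μ, sub_eq_add_neg, add_comm]

end AuxAlgebra

section AuxCont

variable {K : Type*} [RCLike K] {n : ℕ}

lemma sq_continuousAt {Q : QPt K n → K} {q : QPt K n} (hQ : AnalyticAt K Q q) :
    ContinuousAt (Sq Q) q := by
  have hM : ContinuousAt (fun q' => SqMat Q q') q := by
    apply continuousAt_pi.mpr
    intro i
    apply continuousAt_pi.mpr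
    intro μ
    have he : (fun q' => SqMat Q q' i μ) = entryFun Q i μ :=
      funext fun q' => sqMat_apply Q q' i μ
    rw [he]
    exact (entryFun_analyticAt hQ i μ).continuousAt
  exact (Continuous.matrix_det continuous_id).continuousAt.comp hM

end AuxCont

/-- transfer of second-order jet derivatives.  For G(x,y,λ) := T(x, A(x,y,λ)),
∂²G/∂λ_{ℓ₁}∂λ_{ℓ₂} = (1/□³)·Σ_{μ,ν} □^μ_{[0_{1+ℓ₁}]}·□^ν_{[0_{1+ℓ₂}]}·
{□·∂²T/∂a^μ∂a^ν − Σ_τ □^τ_{[a^μ a^ν]}·∂T/∂a^τ}, all quantities on the right being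
evaluated at (x, A(x,y,λ)). -/
theorem second_jet_derivative_transfer {K : Type*} [RCLike K] {n : ℕ} (hn : 2 ≤ n)
    (Q : QPt K n → K) (hQ : AnalyticAt K Q 0) (hSq : Sq Q 0 ≠ 0)
    (A : JPt K n → (Fin (n + 1) → K))
    (hA : AnalyticAt K A (basePt Q)) (hA0 : A (basePt Q) = 0)
    (hid : ∀ᶠ p in 𝓝 (basePt Q),
      p.2.1 = Q (p.1, A p) ∧ ∀ k : Fin n, p.2.2 k = pdX k Q (p.1, A p))
    (T : QPt K n → K) (hT : AnalyticAt K T 0) :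
    ∀ ℓ₁ ℓ₂ : Fin n, ∀ᶠ p in 𝓝 (basePt Q),
      pdL ℓ₁ (pdL ℓ₂ (fun q => T (q.1, A q))) p =
        (1 / (Sq Q (p.1, A p)) ^ 3) *
          ∑ μ : Fin (n + 1), ∑ ν : Fin (n + 1),
            SqCol Q ℓ₁ μ (p.1, A p) * SqCol Q ℓ₂ ν (p.1, A p) *
              (Sq Q (p.1, A p) * pdA ν (pdA μ T) (p.1, A p) -
                ∑ τ : Fin (n + 1), SqAA Q μ ν τ (p.1, A p) * pdA τ T (p.1, A p)) := by
  intro ℓ₁ ℓ₂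
  classical
  set v₁ : JPt K n := (0, 0, Pi.single ℓ₁ 1) with hv₁
  set v₂ : JPt K n := (0, 0, Pi.single ℓ₂ 1) with hv₂
  -- base point facts
  have hφb : (((basePt Q).1, A (basePt Q)) : QPt K n) = 0 := by rw [hA0]; rfl
  have hφt : Filter.Tendsto (fun p : JPt K n => ((p.1, A p) : QPt K n))
      (𝓝 (basePt Q)) (𝓝 0) := by
    have h : ContinuousAt (fun p : JPt K n => ((p.1, A p) : QPt K n)) (basePt Q) :=
      ContinuousAt.prodMk continuousAt_fst hA.continuousAt
    rwa [ContinuousAt, hφb] at h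
  have hAev : ∀ᶠ p in 𝓝 (basePt Q), AnalyticAt K A p := hA.eventually_analyticAt
  have hQev : ∀ᶠ p in 𝓝 (basePt Q), AnalyticAt K Q ((p.1, A p) : QPt K n) :=
    hφt.eventually hQ.eventually_analyticAt
  have hTev : ∀ᶠ p in 𝓝 (basePt Q), AnalyticAt K T ((p.1, A p) : QPt K n) :=
    hφt.eventually hT.eventually_analyticAt
  have hne : ∀ᶠ p in 𝓝 (basePt Q), Sq Q ((p.1, A p) : QPt K n) ≠ 0 :=
    hφt.eventually ((sq_continuousAt hQ).eventually_ne hSq)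
  -- first-order identities
  have EM : ∀ ℓ : Fin n, ∀ᶠ p in 𝓝 (basePt Q), ∀ i : Fin (n + 1),
      ∑ μ, SqMat Q ((p.1, A p) : QPt K n) i μ
          * fderiv K A p ((0, 0, Pi.single ℓ 1) : JPt K n) μ
        = (Pi.single (Fin.succ ℓ) 1 : Fin (n + 1) → K) i := by
    intro ℓ
    filter_upwards [hQev, hAev, eventually_eventually_nhds.mpr hid] with p hQp hAp hidp
    intro i
    refine Fin.cases ?_ (fun k => ?_) i
    · have hy : (fun q : JPt K n => q.2.1) =ᶠ[𝓝 p]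
          fun q : JPt K n => Q ((q.1, A q) : QPt K n) := hidp.mono fun q hq => hq.1
      have h1 := congrArg (fun L : JPt K n →L[K] K => L ((0, 0, Pi.single ℓ 1) : JPt K n))
        (hy.fderiv_eq (𝕜 := K))
      beta_reduce at h1
      rw [fderiv_proj_y,
        fderiv_comp_phi hAp.differentiableAt hQp.differentiableAt _ rfl] at h1
      have h1' : (0 : K) = ∑ μ, fderiv K A p ((0, 0, Pi.single ℓ 1) : JPt K n) μ
          * pdA μ Q ((p.1, A p) : QPt K n) := h1
      rw [Pi.single_eq_of_ne (Fin.succ_ne_zero ℓ).symm]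
      calc ∑ μ, SqMat Q ((p.1, A p) : QPt K n) 0 μ
              * fderiv K A p ((0, 0, Pi.single ℓ 1) : JPt K n) μ
          = ∑ μ, fderiv K A p ((0, 0, Pi.single ℓ 1) : JPt K n) μ
              * pdA μ Q ((p.1, A p) : QPt K n) := by
            refine Finset.sum_congr rfl fun μ _ => ?_
            rw [sqMat_apply]
            exact mul_comm _ _
        _ = 0 := h1'.symm
    · have hy : (fun q : JPt K n => q.2.2 k) =ᶠ[𝓝 p]
          fun q : JPt K n => pdX k Q ((q.1, A q) : QPt K n) := hidp.mono fun q hq => hq.2 k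
      have h1 := congrArg (fun L : JPt K n →L[K] K => L ((0, 0, Pi.single ℓ 1) : JPt K n))
        (hy.fderiv_eq (𝕜 := K))
      beta_reduce at h1
      rw [fderiv_proj_lam,
        fderiv_comp_phi hAp.differentiableAt (pdX_analyticAt hQp k).differentiableAt _ rfl] at h1
      have h1' : (Pi.single ℓ 1 : Fin n → K) k = ∑ μ, fderiv K A p ((0, 0, Pi.single ℓ 1) : JPt K n) μ
          * pdA μ (pdX k Q) ((p.1, A p) : QPt K n) := h1
      have hsingle : (Pi.single (Fin.succ ℓ) 1 : Fin (n + 1) → K) (Fin.succ k) = (Pi.single ℓ 1 : Fin n → K) k := by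
        simp [Pi.single_apply, Fin.succ_inj]
      rw [hsingle]
      calc ∑ μ, SqMat Q ((p.1, A p) : QPt K n) (Fin.succ k) μ
              * fderiv K A p ((0, 0, Pi.single ℓ 1) : JPt K n) μ
          = ∑ μ, fderiv K A p ((0, 0, Pi.single ℓ 1) : JPt K n) μ
              * pdA μ (pdX k Q) ((p.1, A p) : QPt K n) := by
            refine Finset.sum_congr rfl fun μ _ => ?_
            rw [sqMat_apply]
            exact mul_comm _ _
        _ = (Pi.single ℓ 1 : Fin n → K) k := h1'.symm
  -- Cramer for the first derivatives
  have E1 : ∀ ℓ : Fin n, ∀ᶠ p in 𝓝 (basePt Q), ∀ μ : Fin (n + 1),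
      Sq Q ((p.1, A p) : QPt K n) * fderiv K A p ((0, 0, Pi.single ℓ 1) : JPt K n) μ
        = SqCol Q ℓ μ ((p.1, A p) : QPt K n) := by
    intro ℓ
    filter_upwards [EM ℓ] with p hp μ
    exact det_mul_of_mulVec (mulVec_eq_of_rows hp) μ
  -- second-order identity
  have E3 : ∀ᶠ p in 𝓝 (basePt Q), ∀ σ : Fin (n + 1),
      Sq Q ((p.1, A p) : QPt K n) * fderiv K (fun q => fderiv K A q v₂ σ) p v₁
        = -∑ μ, ∑ ν, fderiv K A p v₂ μ * fderiv K A p v₁ ν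
            * SqAA Q μ ν σ ((p.1, A p) : QPt K n) := by
    filter_upwards [hQev, hAev, eventually_eventually_nhds.mpr (EM ℓ₂)] with p hQp hAp hEMp
    have hAd : DifferentiableAt K A p := hAp.differentiableAt
    have hD : ∀ μ : Fin (n + 1), DifferentiableAt K (fun q => fderiv K A q v₂ μ) p :=
      fun μ => (D_analyticAt hAp v₂ μ).differentiableAt
    have hc : ∀ i μ : Fin (n + 1),
        DifferentiableAt K (fun q : JPt K n => entryFun Q i μ ((q.1, A q) : QPt K n)) p :=
      fun i μ => (comp_phi_analyticAt hAp (entryFun_analyticAt hQp i μ)).differentiableAt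
    have hrow : ∀ i : Fin (n + 1),
        (∑ μ, SqMat Q ((p.1, A p) : QPt K n) i μ * fderiv K (fun q => fderiv K A q v₂ μ) p v₁)
          + ∑ μ, fderiv K A p v₂ μ
              * ∑ ν, fderiv K A p v₁ ν * AACol Q μ ν ((p.1, A p) : QPt K n) i = 0 := by
      intro i
      have hev : (fun q : JPt K n =>
            ∑ μ, entryFun Q i μ ((q.1, A q) : QPt K n) * fderiv K A q v₂ μ)
          =ᶠ[𝓝 p] fun _ => (Pi.single (Fin.succ ℓ₂) 1 : Fin (n + 1) → K) i := by
        filter_upwards [hEMp] with q hq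
        rw [← hq i]
        exact Finset.sum_congr rfl fun μ _ => by rw [sqMat_apply]
      have h0 : fderiv K (fun q : JPt K n =>
            ∑ μ, entryFun Q i μ ((q.1, A q) : QPt K n) * fderiv K A q v₂ μ) p v₁ = 0 := by
        rw [hev.fderiv_eq (𝕜 := K), fderiv_fun_const]
        rfl
      have hsum := fderiv_fun_sum (𝕜 := K) (x := p) (u := Finset.univ)
        (A := fun μ (q : JPt K n) =>
          entryFun Q i μ ((q.1, A q) : QPt K n) * fderiv K A q v₂ μ)
        (fun μ _ => (hc i μ).mul (hD μ))
      rw [hsum] at h0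
      rw [ContinuousLinearMap.sum_apply] at h0
      have hterm : ∀ μ : Fin (n + 1),
          fderiv K (fun q : JPt K n =>
              entryFun Q i μ ((q.1, A q) : QPt K n) * fderiv K A q v₂ μ) p v₁
            = SqMat Q ((p.1, A p) : QPt K n) i μ * fderiv K (fun q => fderiv K A q v₂ μ) p v₁
              + fderiv K A p v₂ μ
                * ∑ ν, fderiv K A p v₁ ν * AACol Q μ ν ((p.1, A p) : QPt K n) i := by
        intro μ
        rw [fderiv_fun_mul (hc i μ) (hD μ)]
        have hcv : fderiv K (fun q : JPt K n => entryFun Q i μ ((q.1, A q) : QPt K n)) p v₁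
            = ∑ ν, fderiv K A p v₁ ν * AACol Q μ ν ((p.1, A p) : QPt K n) i := by
          rw [fderiv_comp_phi hAd ((entryFun_analyticAt hQp i μ).differentiableAt) _ rfl]
          exact Finset.sum_congr rfl fun ν _ => by rw [pdA_entryFun]
        simp only [ContinuousLinearMap.add_apply, ContinuousLinearMap.smul_apply,
          smul_eq_mul]
        rw [hcv, sqMat_apply]
      rw [Finset.sum_congr rfl (fun μ _ => hterm μ)] at h0
      rw [Finset.sum_add_distrib] at h0
      exact h0
    intro σ
    set w : Fin (n + 1) → K := fun i =>
      -∑ μ, fderiv K A p v₂ μ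
          * ∑ ν, fderiv K A p v₁ ν * AACol Q μ ν ((p.1, A p) : QPt K n) i with hw
    have hMv : Matrix.mulVec (SqMat Q ((p.1, A p) : QPt K n))
        (fun μ => fderiv K (fun q => fderiv K A q v₂ μ) p v₁) = w := by
      apply mulVec_eq_of_rows
      intro i
      rw [hw]
      exact eq_neg_of_add_eq_zero_left (hrow i)
    have hc1 : Sq Q ((p.1, A p) : QPt K n)
        * fderiv K (fun q => fderiv K A q v₂ σ) p v₁
        = ((SqMat Q ((p.1, A p) : QPt K n)).updateCol σ w).det :=
      det_mul_of_mulVec hMv σ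
    have hwv : w = -∑ μ, ∑ ν, (fderiv K A p v₂ μ * fderiv K A p v₁ ν) •
        AACol Q μ ν ((p.1, A p) : QPt K n) := by
      funext i
      rw [hw]
      simp only [Pi.neg_apply, Finset.sum_apply, Pi.smul_apply, smul_eq_mul]
      congr 1
      refine Finset.sum_congr rfl fun μ _ => ?_
      rw [Finset.mul_sum]
      exact Finset.sum_congr rfl fun ν _ => by ring
    have hcram : Matrix.cramer (SqMat Q ((p.1, A p) : QPt K n)) w
        = -∑ μ, ∑ ν, (fderiv K A p v₂ μ * fderiv K A p v₁ ν) •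
            Matrix.cramer (SqMat Q ((p.1, A p) : QPt K n))
              (AACol Q μ ν ((p.1, A p) : QPt K n)) := by
      rw [hwv, map_neg, map_sum]
      congr 1
      refine Finset.sum_congr rfl fun μ _ => ?_
      rw [map_sum]
      exact Finset.sum_congr rfl fun ν _ => by rw [map_smul]
    have hdet : ((SqMat Q ((p.1, A p) : QPt K n)).updateCol σ w).det
        = Matrix.cramer (SqMat Q ((p.1, A p) : QPt K n)) w σ :=
      (Matrix.cramer_apply _ _ _).symm
    rw [hc1, hdet, hcram]
    simp only [Pi.neg_apply, Finset.sum_apply, Pi.smul_apply, smul_eq_mul]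
    refine congrArg Neg.neg (Finset.sum_congr rfl fun μ _ =>
      Finset.sum_congr rfl fun ν _ => ?_)
    rw [Matrix.cramer_apply, ← sqAA_eq]
  -- expansion of the first jet derivative of G
  have hG1 : ∀ᶠ p in 𝓝 (basePt Q),
      pdL ℓ₂ (fun q : JPt K n => T ((q.1, A q) : QPt K n)) p
        = ∑ μ, fderiv K A p v₂ μ * pdA μ T ((p.1, A p) : QPt K n) := by
    filter_upwards [hAev, hTev] with p hAp hTp
    exact fderiv_comp_phi hAp.differentiableAt hTp.differentiableAt _ rfl
  -- final assembly
  filter_upwards [hAev, hQev, hTev, hne, E1 ℓ₁, E1 ℓ₂, E3,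
    eventually_eventually_nhds.mpr hG1] with p hAp hQp hTp hnep hE1a hE1b hE3p hG1p
  have hAd : DifferentiableAt K A p := hAp.differentiableAt
  have hD : ∀ μ : Fin (n + 1), DifferentiableAt K (fun q => fderiv K A q v₂ μ) p :=
    fun μ => (D_analyticAt hAp v₂ μ).differentiableAt
  have hct : ∀ μ : Fin (n + 1),
      DifferentiableAt K (fun q : JPt K n => pdA μ T ((q.1, A q) : QPt K n)) p :=
    fun μ => (comp_phi_analyticAt hAp (pdA_analyticAt hTp μ)).differentiableAt
  have hL : pdL ℓ₁ (pdL ℓ₂ (fun q : JPt K n => T ((q.1, A q) : QPt K n))) p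
      = fderiv K (fun p' : JPt K n =>
          ∑ μ, fderiv K A p' v₂ μ * pdA μ T ((p'.1, A p') : QPt K n)) p v₁ := by
    show fderiv K (pdL ℓ₂ (fun q : JPt K n => T ((q.1, A q) : QPt K n))) p v₁ = _
    rw [Filter.EventuallyEq.fderiv_eq (𝕜 := K) hG1p]
  have hsum := fderiv_fun_sum (𝕜 := K) (x := p) (u := Finset.univ)
    (A := fun μ (p' : JPt K n) =>
      fderiv K A p' v₂ μ * pdA μ T ((p'.1, A p') : QPt K n))
    (fun μ _ => (hD μ).mul (hct μ))
  have hterm : ∀ μ : Fin (n + 1),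
      fderiv K (fun p' : JPt K n =>
          fderiv K A p' v₂ μ * pdA μ T ((p'.1, A p') : QPt K n)) p v₁
        = pdA μ T ((p.1, A p) : QPt K n) * fderiv K (fun q => fderiv K A q v₂ μ) p v₁
          + fderiv K A p v₂ μ
            * ∑ ν, fderiv K A p v₁ ν * pdA ν (pdA μ T) ((p.1, A p) : QPt K n) := by
    intro μ
    rw [fderiv_fun_mul (hD μ) (hct μ)]
    have hcv : fderiv K (fun q : JPt K n => pdA μ T ((q.1, A q) : QPt K n)) p v₁
        = ∑ ν, fderiv K A p v₁ ν * pdA ν (pdA μ T) ((p.1, A p) : QPt K n) :=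
      fderiv_comp_phi hAd ((pdA_analyticAt hTp μ).differentiableAt) _ rfl
    simp only [ContinuousLinearMap.add_apply, ContinuousLinearMap.smul_apply, smul_eq_mul]
    rw [hcv]
    ring
  have halg := final_algebra (hs := hnep)
    (c1 := fun μ => SqCol Q ℓ₁ μ ((p.1, A p) : QPt K n))
    (c2 := fun μ => SqCol Q ℓ₂ μ ((p.1, A p) : QPt K n))
    (t := fun τ => pdA τ T ((p.1, A p) : QPt K n))
    (D1 := fun μ => fderiv K A p v₁ μ)
    (D2 := fun μ => fderiv K A p v₂ μ)
    (D3 := fun σ => fderiv K (fun q => fderiv K A q v₂ σ) p v₁)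
    (TT := fun μ ν => pdA ν (pdA μ T) ((p.1, A p) : QPt K n))
    (S := fun μ ν σ => SqAA Q μ ν σ ((p.1, A p) : QPt K n))
    hE1a hE1b hE3p
    (fun μ ν => pdA_comm hTp μ ν)
    (fun μ ν σ => sqAA_symm hQp μ ν σ)
  calc pdL ℓ₁ (pdL ℓ₂ (fun q : JPt K n => T ((q.1, A q) : QPt K n))) p
      = fderiv K (fun p' : JPt K n =>
          ∑ μ, fderiv K A p' v₂ μ * pdA μ T ((p'.1, A p') : QPt K n)) p v₁ := hL
    _ = ∑ μ, fderiv K (fun p' : JPt K n =>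
          fderiv K A p' v₂ μ * pdA μ T ((p'.1, A p') : QPt K n)) p v₁ := by
        rw [hsum, ContinuousLinearMap.sum_apply]
    _ = ∑ μ, (pdA μ T ((p.1, A p) : QPt K n)
            * fderiv K (fun q => fderiv K A q v₂ μ) p v₁
          + fderiv K A p v₂ μ
            * ∑ ν, fderiv K A p v₁ ν * pdA ν (pdA μ T) ((p.1, A p) : QPt K n)) :=
        Finset.sum_congr rfl fun μ _ => hterm μ
    _ = (1 / (Sq Q ((p.1, A p) : QPt K n)) ^ 3) *
          ∑ μ, ∑ ν, SqCol Q ℓ₁ μ ((p.1, A p) : QPt K n)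
            * SqCol Q ℓ₂ ν ((p.1, A p) : QPt K n)
            * (Sq Q ((p.1, A p) : QPt K n) * pdA ν (pdA μ T) ((p.1, A p) : QPt K n)
              - ∑ τ, SqAA Q μ ν τ ((p.1, A p) : QPt K n)
                  * pdA τ T ((p.1, A p) : QPt K n)) := halg
end
end

section
/- Let n ≥ 2 and let Θ = Θ(z, z̄, w̄) be holomorphic near 0 in ℂ^{2n+1} with Θ = −w̄ + O(2) and Δ(0,0,0) ≠ 0. Let ζ = (ζ₁,…,ζₙ) and ξ be the holomorphic implicit functions of (z, w, λ₁,…,λₙ) satisfying w ≡ Θ(z, ζ(z,w,λ), ξ(z,w,λ)) and λ_k ≡ Θ_{z_k}(z, ζ(z,w,λ), ξ(z,w,λ)) for k = 1,…,n, and define Φ_{k₁,k₂}(z,w,λ) := Θ_{z_{k₁}z_{k₂}}(z, ζ(z,w,λ), ξ(z,w,λ)). Then for all k₁, k₂, ℓ₁, ℓ₂ ∈ {1,…,n}, identically near the base point: ∂²Φ_{k₁,k₂}/∂λ_{ℓ₁}∂λ_{ℓ₂} = (1/Δ³) Σ_{μ=1}^{n+1} Σ_{ν=1}^{n+1} Δ^μ_{[0_{1+ℓ₁}]}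 · Δ^ν_{[0_{1+ℓ₂}]} · { Δ · ∂⁴Θ/∂z_{k₁}∂z_{k₂}∂t̄_μ∂t̄_ν − Σ_{τ=1}^{n+1} Δ^τ_{[t̄^μ t̄^ν]} · ∂³Θ/∂z_{k₁}∂z_{k₂}∂t̄_τ }, where all determinants and derivatives of Θ on the right-hand side are evaluated at (z, ζ(z,w,λ), ξ(z,w,λ)). -/
open Topology Filter Set

noncomputable section

/-- The first-order jet space ℂⁿ × ℂ × ℂⁿ of variables (z, w, λ), λ_k = w_{z_k}. -/
abbrev JPtC (n : ℕ) := (Fin n → ℂ) × ℂ × (Fin n → ℂ)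

/-- Partial derivative ∂/∂λ_ℓ on the jet space. -/
def pdLC {n : ℕ} (ℓ : Fin n) (G : JPtC n → ℂ) : JPtC n → ℂ :=
  fun q => fderiv ℂ G q (0, 0, Pi.single ℓ 1)

/-- The base point (0, Θ(0,0,0), Θ_{z₁}(0,0,0), …, Θ_{zₙ}(0,0,0)) in the jet space. -/
def basePtC {n : ℕ} (Θ : Pt n → ℂ) : JPtC n :=
  ((0 : Fin n → ℂ), Θ 0, fun k => pdZ k Θ 0)

section Helpers

open ContinuousLinearMap

variable {n : ℕ}

/-- Analytic functions are closed under directional derivatives. -/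
lemma analyticAt_dirDeriv {E : Type*} [NormedAddCommGroup E] [NormedSpace ℂ E]
    [CompleteSpace E] {f : E → ℂ} {x : E} (h : AnalyticAt ℂ f x) (v : E) :
    AnalyticAt ℂ (fun y => fderiv ℂ f y v) x :=
  ((ContinuousLinearMap.apply ℂ ℂ v).analyticAt _).comp h.fderiv

lemma analyticAt_pdZ {f : Pt n → ℂ} {x : Pt n} (h : AnalyticAt ℂ f x) (k : Fin n) :
    AnalyticAt ℂ (pdZ k f) x := analyticAt_dirDeriv h _

lemma analyticAt_pdT {f : Pt n → ℂ} {x : Pt n} (h : AnalyticAt ℂ f x) (μ : Fin (n+1)) :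
    AnalyticAt ℂ (pdT μ f) x := analyticAt_dirDeriv h _

/-- Second derivative in two directions as iterated fderiv. -/
lemma fderiv_fderiv_apply {E : Type*} [NormedAddCommGroup E] [NormedSpace ℂ E]
    [CompleteSpace E] {f : E → ℂ} {x : E} (h : AnalyticAt ℂ f x) (v w : E) :
    fderiv ℂ (fun y => fderiv ℂ f y v) x w = fderiv ℂ (fderiv ℂ f) x w v := by
  have h1 : DifferentiableAt ℂ (fderiv ℂ f) x := h.fderiv.differentiableAt
  have h2 : fderiv ℂ (fun y => fderiv ℂ f y v) x
      = (ContinuousLinearMap.apply ℂ ℂ v).comp (fderiv ℂ (fderiv ℂ f) x) :=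
    (((ContinuousLinearMap.apply ℂ ℂ v).hasFDerivAt).comp x h1.hasFDerivAt).fderiv
  rw [h2]; rfl

/-- Symmetry of second directional derivatives of analytic functions. -/
lemma dirDeriv_symm {E : Type*} [NormedAddCommGroup E] [NormedSpace ℂ E]
    [CompleteSpace E] {f : E → ℂ} {x : E} (h : AnalyticAt ℂ f x) (v w : E) :
    fderiv ℂ (fun y => fderiv ℂ f y v) x w = fderiv ℂ (fun y => fderiv ℂ f y w) x v := by
  rw [fderiv_fderiv_apply h, fderiv_fderiv_apply h]
  exact ((h.contDiffAt (n := ⊤)).isSymmSndFDerivAt le_top) w v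

lemma pdT_symm {f : Pt n → ℂ} {x : Pt n} (h : AnalyticAt ℂ f x) (μ ν : Fin (n+1)) :
    pdT μ (pdT ν f) x = pdT ν (pdT μ f) x := dirDeriv_symm h _ _

end Helpers
section Helpers2

variable {n : ℕ}

/-- The rows of the matrix Δ, as functions: row 0 is Θ, row (1+k) is Θ_{z_k}. -/
def rowF (Θ : Pt n → ℂ) (i : Fin (n + 1)) : Pt n → ℂ :=
  Fin.cons (α := fun _ => Pt n → ℂ) Θ (fun k => pdZ k Θ) i

lemma rowF_zero (Θ : Pt n → ℂ) : rowF Θ 0 = Θ := rfl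

lemma rowF_succ (Θ : Pt n → ℂ) (k : Fin n) : rowF Θ k.succ = pdZ k Θ := by
  simp [rowF]

lemma analyticAt_rowF {Θ : Pt n → ℂ} {x : Pt n} (h : AnalyticAt ℂ Θ x) (i : Fin (n + 1)) :
    AnalyticAt ℂ (rowF Θ i) x := by
  induction i using Fin.cases with
  | zero => exact h
  | succ k => rw [rowF_succ]; exact analyticAt_pdZ h k

lemma DeltaMat_apply (Θ : Pt n → ℂ) (p : Pt n) (i μ : Fin (n + 1)) :
    DeltaMat Θ p i μ = pdT μ (rowF Θ i) p := by
  induction i using Fin.cases with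
  | zero => rfl
  | succ k => simp [DeltaMat, rowF_succ]

/-- Coordinates of a tangent vector of the form (0, a, b) w.r.t. the t̄-directions. -/
def tcoord {n : ℕ} (a : Fin n → ℂ) (b : ℂ) (μ : Fin (n + 1)) : ℂ :=
  if h : (μ : ℕ) < n then a ⟨μ, h⟩ else b

lemma vec_decomp (a : Fin n → ℂ) (b : ℂ) :
    ((0 : Fin n → ℂ), a, b) = ∑ μ : Fin (n + 1), tcoord a b μ • tdir n μ := by
  rw [Fin.sum_univ_castSucc]
  have h1 : ∀ k : Fin n, tcoord a b k.castSucc • tdir n k.castSucc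
      = ((0 : Fin n → ℂ), Pi.single k (a k), (0 : ℂ)) := by
    intro k
    have hk : ((k.castSucc : Fin (n + 1)) : ℕ) < n := by simp [k.isLt]
    have h2 : (⟨((k.castSucc : Fin (n+1)) : ℕ), hk⟩ : Fin n) = k := by
      ext; simp
    simp only [tcoord, tdir, hk, dif_pos, h2, Prod.smul_mk, smul_zero]
    congr 1
    rw [← Pi.single_smul, smul_eq_mul, mul_one]
  have h3 : tcoord a b (Fin.last n) • tdir n (Fin.last n) = ((0:Fin n → ℂ), 0, b) := by
    have : ¬ (((Fin.last n : Fin (n+1)) : ℕ) < n) := by simp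
    simp [tcoord, tdir, this, Prod.smul_mk, smul_eq_mul]
  simp only [h1, h3]
  have hsum : (∑ k : Fin n, ((0 : Fin n → ℂ), Pi.single k (a k), (0:ℂ)))
      = ((0 : Fin n → ℂ), a, (0:ℂ)) := by
    rw [Prod.ext_iff, Prod.ext_iff]
    refine ⟨by rw [Prod.fst_sum]; simp, ?_, by rw [Prod.snd_sum, Prod.snd_sum]; simp⟩
    · rw [Prod.snd_sum, Prod.fst_sum]
      exact Finset.univ_sum_single _
  rw [hsum, Prod.mk_add_mk, Prod.mk_add_mk]
  simp

lemma fderiv_t_expand {f : Pt n → ℂ} {p : Pt n} (a : Fin n → ℂ) (b : ℂ) :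
    fderiv ℂ f p (0, a, b) = ∑ μ : Fin (n + 1), tcoord a b μ * pdT μ f p := by
  rw [vec_decomp a b, map_sum]
  exact Finset.sum_congr rfl fun μ _ => by rw [map_smul, smul_eq_mul]; rfl

end Helpers2
section Helpers3

variable {n : ℕ}

/-- λ-derivative coordinates of the implicit map. -/
def gam (Z : JPtC n → (Fin n → ℂ) × ℂ) (ℓ : Fin n) (q : JPtC n) (μ : Fin (n + 1)) : ℂ :=
  tcoord (fderiv ℂ Z q ((0 : Fin n → ℂ), (0 : ℂ), Pi.single ℓ 1)).1
    (fderiv ℂ Z q ((0 : Fin n → ℂ), (0 : ℂ), Pi.single ℓ 1)).2 μ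

lemma fderiv_comp_F {f : Pt n → ℂ} {Z : JPtC n → (Fin n → ℂ) × ℂ} {q : JPtC n}
    (hf : DifferentiableAt ℂ f (q.1, Z q)) (hZ : DifferentiableAt ℂ Z q) (v : JPtC n) :
    fderiv ℂ (fun q' => f (q'.1, Z q')) q v
      = fderiv ℂ f (q.1, Z q) (v.1, fderiv ℂ Z q v) := by
  have hF : HasFDerivAt (fun q' : JPtC n => (q'.1, Z q'))
      ((ContinuousLinearMap.fst ℂ (Fin n → ℂ) (ℂ × (Fin n → ℂ))).prod (fderiv ℂ Z q)) q :=
    HasFDerivAt.prodMk ((ContinuousLinearMap.fst ℂ (Fin n → ℂ) (ℂ × (Fin n → ℂ))).hasFDerivAt)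
      hZ.hasFDerivAt
  rw [show (fun q' : JPtC n => f (q'.1, Z q')) = f ∘ (fun q' => (q'.1, Z q')) from rfl,
    (hf.hasFDerivAt.comp q hF).fderiv]
  rfl

/-- The chain rule in coordinates: λ-derivative of g composed with the implicit map. -/
lemma pdLC_comp {f : Pt n → ℂ} {Z : JPtC n → (Fin n → ℂ) × ℂ} {q : JPtC n}
    (hf : DifferentiableAt ℂ f (q.1, Z q)) (hZ : DifferentiableAt ℂ Z q) (ℓ : Fin n) :
    pdLC ℓ (fun q' => f (q'.1, Z q')) q
      = ∑ μ : Fin (n + 1), gam Z ℓ q μ * pdT μ f (q.1, Z q) := by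
  unfold pdLC
  rw [fderiv_comp_F hf hZ]
  have h0 : (((0 : Fin n → ℂ), (0 : ℂ), Pi.single ℓ 1) : JPtC n).1 = 0 := rfl
  rw [h0]
  have h1 := fderiv_t_expand (f := f) (p := (q.1, Z q))
    (fderiv ℂ Z q ((0 : Fin n → ℂ), (0:ℂ), Pi.single ℓ 1)).1
    (fderiv ℂ Z q ((0 : Fin n → ℂ), (0:ℂ), Pi.single ℓ 1)).2
  show fderiv ℂ f (q.1, Z q) (0, (fderiv ℂ Z q ((0 : Fin n → ℂ), (0:ℂ), Pi.single ℓ 1)).1,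
    (fderiv ℂ Z q ((0 : Fin n → ℂ), (0:ℂ), Pi.single ℓ 1)).2) = _
  rw [h1]
  rfl

lemma pdLC_congr {G H : JPtC n → ℂ} {q : JPtC n} (ℓ : Fin n) (h : G =ᶠ[𝓝 q] H) :
    pdLC ℓ G q = pdLC ℓ H q := by
  unfold pdLC; rw [h.fderiv_eq]

lemma pdLC_mul {G H : JPtC n → ℂ} {q : JPtC n} (ℓ : Fin n)
    (hG : DifferentiableAt ℂ G q) (hH : DifferentiableAt ℂ H q) :
    pdLC ℓ (fun q' => G q' * H q') q = pdLC ℓ G q * H q + G q * pdLC ℓ H q := by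
  unfold pdLC
  rw [fderiv_fun_mul hG hH]
  simp [smul_eq_mul]
  ring

lemma pdLC_sum {ι : Type*} (s : Finset ι) {G : ι → JPtC n → ℂ} {q : JPtC n} (ℓ : Fin n)
    (h : ∀ i ∈ s, DifferentiableAt ℂ (G i) q) :
    pdLC ℓ (fun q' => ∑ i ∈ s, G i q') q = ∑ i ∈ s, pdLC ℓ (G i) q := by
  unfold pdLC
  rw [fderiv_fun_sum h]
  simp

lemma pdLC_snd1 (ℓ : Fin n) (q : JPtC n) : pdLC ℓ (fun q' => q'.2.1) q = 0 := by
  have h : (fun q' : JPtC n => q'.2.1)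
      = ⇑((ContinuousLinearMap.fst ℂ ℂ (Fin n → ℂ)).comp
          (ContinuousLinearMap.snd ℂ (Fin n → ℂ) (ℂ × (Fin n → ℂ)))) := rfl
  unfold pdLC
  rw [h, ContinuousLinearMap.fderiv]
  rfl

lemma pdLC_snd2 (ℓ k : Fin n) (q : JPtC n) :
    pdLC ℓ (fun q' => q'.2.2 k) q = (Pi.single ℓ 1 : Fin n → ℂ) k := by
  have h : (fun q' : JPtC n => q'.2.2 k)
      = ⇑((ContinuousLinearMap.proj k).comp
          ((ContinuousLinearMap.snd ℂ ℂ (Fin n → ℂ)).comp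
            (ContinuousLinearMap.snd ℂ (Fin n → ℂ) (ℂ × (Fin n → ℂ))))) := rfl
  unfold pdLC
  rw [h, ContinuousLinearMap.fderiv]
  rfl

/-- Solving a linear system by Cramer's rule. -/
lemma solve_cramer {m : ℕ} (A : Matrix (Fin m) (Fin m) ℂ) (x b : Fin m → ℂ)
    (hd : A.det ≠ 0) (h : A.mulVec x = b) (i : Fin m) :
    x i = (A.det)⁻¹ * Matrix.cramer A b i := by
  have hinj : Function.Injective A.mulVec :=
    Matrix.mulVec_injective_iff_isUnit.2 ((Matrix.isUnit_iff_isUnit_det A).2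
      (isUnit_iff_ne_zero.2 hd))
  have h2 : A.mulVec ((A.det)⁻¹ • Matrix.cramer A b) = b := by
    rw [Matrix.mulVec_smul, Matrix.mulVec_cramer, smul_smul, inv_mul_cancel₀ hd, one_smul]
  have := hinj (h.trans h2.symm)
  rw [this]
  simp [smul_eq_mul]

end Helpers3
section Helpers4

variable {n : ℕ}

lemma analyticAt_gam {Z : JPtC n → (Fin n → ℂ) × ℂ} {q : JPtC n} (hZ : AnalyticAt ℂ Z q)
    (ℓ : Fin n) (μ : Fin (n + 1)) : AnalyticAt ℂ (fun q' => gam Z ℓ q' μ) q := by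
  unfold gam tcoord
  by_cases h : (μ : ℕ) < n
  · simp only [h, dif_pos]
    exact (((ContinuousLinearMap.proj (R := ℂ) (φ := fun _ : Fin n => ℂ) (⟨μ, h⟩ : Fin n)).comp
      ((ContinuousLinearMap.fst ℂ (Fin n → ℂ) ℂ).comp
        (ContinuousLinearMap.apply ℂ ((Fin n → ℂ) × ℂ)
          ((0 : Fin n → ℂ), (0 : ℂ), Pi.single ℓ 1)))).analyticAt _).comp hZ.fderiv
  · simp only [h, dif_neg, not_false_iff]
    exact (((ContinuousLinearMap.snd ℂ (Fin n → ℂ) ℂ).comp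
        (ContinuousLinearMap.apply ℂ ((Fin n → ℂ) × ℂ)
          ((0 : Fin n → ℂ), (0 : ℂ), Pi.single ℓ 1))).analyticAt _).comp hZ.fderiv

lemma analyticAt_det {m : ℕ} {X : Type*} [NormedAddCommGroup X] [NormedSpace ℂ X]
    {E : X → Matrix (Fin m) (Fin m) ℂ} {q : X}
    (h : ∀ i j, AnalyticAt ℂ (fun q' => E q' i j) q) :
    AnalyticAt ℂ (fun q' => (E q').det) q := by
  simp only [Matrix.det_apply', Units.smul_def]
  apply Finset.analyticAt_fun_sum
  intro σ _
  exact analyticAt_const.mul (Finset.analyticAt_fun_prod _ fun i _ => h (σ i) i)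

end Helpers4
section Helpers5

variable {n : ℕ}

lemma cramer_col_DeltaTT (Θ : Pt n → ℂ) (p : Pt n) (μ ν τ : Fin (n + 1)) :
    Matrix.cramer (DeltaMat Θ p) (fun i => pdT ν (pdT μ (rowF Θ i)) p) τ
      = DeltaTT Θ μ ν τ p := by
  rw [Matrix.cramer_apply]
  unfold DeltaTT
  have hcol : (fun i => pdT ν (pdT μ (rowF Θ i)) p)
      = Fin.cons (α := fun _ => ℂ) (pdT ν (pdT μ Θ) p)
          (fun k : Fin n => pdT ν (pdT μ (pdZ k Θ)) p) := by
    funext i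
    induction i using Fin.cases with
    | zero => simp [rowF_zero]
    | succ k => simp [rowF_succ]
  rw [hcol]

lemma DeltaTT_symm {Θ : Pt n → ℂ} {p : Pt n} (h : AnalyticAt ℂ Θ p) (μ ν τ : Fin (n + 1)) :
    DeltaTT Θ μ ν τ p = DeltaTT Θ ν μ τ p := by
  unfold DeltaTT
  have hcol : (Fin.cons (α := fun _ => ℂ) (pdT ν (pdT μ Θ) p)
      (fun k : Fin n => pdT ν (pdT μ (pdZ k Θ)) p))
      = Fin.cons (α := fun _ => ℂ) (pdT μ (pdT ν Θ) p)
          (fun k : Fin n => pdT μ (pdT ν (pdZ k Θ)) p) := by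
    funext i
    induction i using Fin.cases with
    | zero =>
      simp only [Fin.cons_zero]
      exact pdT_symm h ν μ
    | succ k =>
      simp only [Fin.cons_succ]
      exact pdT_symm (analyticAt_pdZ h k) ν μ
  rw [hcol]

end Helpers5
section Helpers6

/-- The final algebraic identity. -/
lemma final_algebra_s10 {m : ℕ} {d : ℂ} (hd : d ≠ 0) (C1 C2 G : Fin m → ℂ)
    (T : Fin m → Fin m → Fin m → ℂ) (G2 : Fin m → Fin m → ℂ)
    (hT : ∀ μ ν τ, T μ ν τ = T ν μ τ) (hG2 : ∀ μ ν, G2 μ ν = G2 ν μ) :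
    ∑ μ : Fin m, (d⁻¹ * (- ∑ μ' : Fin m, ∑ ν : Fin m,
        (d⁻¹ * C1 ν) * (d⁻¹ * C2 μ') * T μ' ν μ) * G μ
      + (d⁻¹ * C2 μ) * ∑ ν : Fin m, (d⁻¹ * C1 ν) * G2 ν μ)
    = (1 / d ^ 3) * ∑ μ : Fin m, ∑ ν : Fin m,
        C1 μ * C2 ν * (d * G2 ν μ - ∑ τ : Fin m, T μ ν τ * G τ) := by
  rw [Finset.sum_add_distrib]
  have hR : (1 / d ^ 3) * ∑ μ : Fin m, ∑ ν : Fin m,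
      C1 μ * C2 ν * (d * G2 ν μ - ∑ τ : Fin m, T μ ν τ * G τ)
      = (∑ μ : Fin m, ∑ ν : Fin m, (1 / d ^ 2) * (C1 μ * C2 ν * G2 ν μ))
        + ∑ μ : Fin m, ∑ ν : Fin m, ∑ τ : Fin m,
            -((1 / d ^ 3) * (C1 μ * C2 ν * T μ ν τ * G τ)) := by
    rw [Finset.mul_sum, ← Finset.sum_add_distrib]
    refine Finset.sum_congr rfl fun μ _ => ?_
    rw [Finset.mul_sum, ← Finset.sum_add_distrib]
    refine Finset.sum_congr rfl fun ν _ => ?_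
    have e1 : ∑ τ : Fin m, -((1 / d ^ 3) * (C1 μ * C2 ν * T μ ν τ * G τ))
        = -((1 / d ^ 3 * (C1 μ * C2 ν)) * ∑ τ : Fin m, T μ ν τ * G τ) := by
      rw [Finset.mul_sum, ← Finset.sum_neg_distrib]
      exact Finset.sum_congr rfl fun τ _ => by ring
    rw [e1, mul_sub]
    field_simp
    ring
  rw [hR]
  rw [add_comm (∑ μ : Fin m, ∑ ν : Fin m, (1 / d ^ 2) * (C1 μ * C2 ν * G2 ν μ)) _]
  congr 1
  · -- third-order part
    have h1 : ∀ μ : Fin m, d⁻¹ * (- ∑ μ' : Fin m, ∑ ν : Fin m,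
          (d⁻¹ * C1 ν) * (d⁻¹ * C2 μ') * T μ' ν μ) * G μ
        = ∑ μ' : Fin m, ∑ ν : Fin m,
            -((1 / d ^ 3) * (C1 ν * C2 μ' * T ν μ' μ * G μ)) := by
      intro μ
      have e2 : d⁻¹ * (∑ μ' : Fin m, ∑ ν : Fin m,
            (d⁻¹ * C1 ν) * (d⁻¹ * C2 μ') * T μ' ν μ) * G μ
          = ∑ μ' : Fin m, ∑ ν : Fin m,
              d⁻¹ * ((d⁻¹ * C1 ν) * (d⁻¹ * C2 μ') * T μ' ν μ) * G μ := by
        rw [Finset.mul_sum, Finset.sum_mul]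
        refine Finset.sum_congr rfl fun μ' _ => ?_
        rw [Finset.mul_sum, Finset.sum_mul]
      have e3 : ∑ μ' : Fin m, ∑ ν : Fin m,
            -((1 / d ^ 3) * (C1 ν * C2 μ' * T ν μ' μ * G μ))
          = - ∑ μ' : Fin m, ∑ ν : Fin m,
              (1 / d ^ 3) * (C1 ν * C2 μ' * T ν μ' μ * G μ) := by
        rw [← Finset.sum_neg_distrib]
        exact Finset.sum_congr rfl fun μ' _ => by rw [← Finset.sum_neg_distrib]
      rw [mul_neg, neg_mul, e2, e3, neg_inj]
      refine Finset.sum_congr rfl fun μ' _ => Finset.sum_congr rfl fun ν _ => ?_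
      rw [hT μ' ν μ, one_div, ← inv_pow]
      ring
    simp only [h1]
    refine Eq.trans (Finset.sum_congr rfl fun μ _ => Finset.sum_comm) ?_
    rw [Finset.sum_comm]
    exact Finset.sum_congr rfl fun ν _ => Finset.sum_comm
  · -- second-order part
    have h1 : ∀ μ : Fin m, (d⁻¹ * C2 μ) * ∑ ν : Fin m, (d⁻¹ * C1 ν) * G2 ν μ
        = ∑ ν : Fin m, (1 / d ^ 2) * (C2 μ * C1 ν * G2 ν μ) := by
      intro μ
      rw [Finset.mul_sum]
      refine Finset.sum_congr rfl fun ν _ => ?_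
      field_simp
    simp only [h1]
    rw [Finset.sum_comm]
    refine Finset.sum_congr rfl fun μ _ => Finset.sum_congr rfl fun ν _ => ?_
    rw [hG2 μ ν]
    ring

end Helpers6
/-- the explicit expression of the second-order jet derivatives
∂²Φ_{k₁,k₂}/∂λ_{ℓ₁}∂λ_{ℓ₂} of the right-hand sides Φ_{k₁,k₂}(z,w,λ) :=
Θ_{z_{k₁}z_{k₂}}(z, ζ(z,w,λ), ξ(z,w,λ)) of the associated PDE system in terms of the
fourth-order jet of Θ, where (ζ, ξ) = ZX are the implicit functions. -/
theorem second_jet_derivative_of_Phi {n : ℕ} (hn : 2 ≤ n) (Θ : Pt n → ℂ)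
    (hΘ : AnalyticAt ℂ Θ 0) (h2 : IsOrderTwo Θ) (hLevi : Delta Θ 0 ≠ 0)
    (ZX : JPtC n → (Fin n → ℂ) × ℂ)
    (hZX : AnalyticAt ℂ ZX (basePtC Θ)) (hZX0 : ZX (basePtC Θ) = 0)
    (hid : ∀ᶠ q in 𝓝 (basePtC Θ),
      q.2.1 = Θ (q.1, ZX q) ∧ ∀ k : Fin n, q.2.2 k = pdZ k Θ (q.1, ZX q)) :
    ∀ k₁ k₂ ℓ₁ ℓ₂ : Fin n, ∀ᶠ q in 𝓝 (basePtC Θ),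
      pdLC ℓ₁ (pdLC ℓ₂ (fun q' => pdZ k₂ (pdZ k₁ Θ) (q'.1, ZX q'))) q =
        (1 / (Delta Θ (q.1, ZX q)) ^ 3) *
          ∑ μ : Fin (n + 1), ∑ ν : Fin (n + 1),
            DeltaCol Θ ℓ₁ μ (q.1, ZX q) * DeltaCol Θ ℓ₂ ν (q.1, ZX q) *
              (Delta Θ (q.1, ZX q) * pdT ν (pdT μ (pdZ k₂ (pdZ k₁ Θ))) (q.1, ZX q) -
                ∑ τ : Fin (n + 1),
                  DeltaTT Θ μ ν τ (q.1, ZX q) * pdT τ (pdZ k₂ (pdZ k₁ Θ)) (q.1, ZX q)) := by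
  intro k₁ k₂ ℓ₁ ℓ₂
  set g : Pt n → ℂ := pdZ k₂ (pdZ k₁ Θ) with hg
  have hF0 : ((basePtC Θ).1, ZX (basePtC Θ)) = (0 : Pt n) := by rw [hZX0]; rfl
  -- the basic pointwise property holding eventually near the base point
  have hZXev : ∀ᶠ q in 𝓝 (basePtC Θ), AnalyticAt ℂ ZX q := hZX.eventually_analyticAt
  have hFan : AnalyticAt ℂ (fun q : JPtC n => (q.1, ZX q)) (basePtC Θ) :=
    analyticAt_fst.prod hZX
  have hΘev : ∀ᶠ q in 𝓝 (basePtC Θ), AnalyticAt ℂ Θ (q.1, ZX q) := by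
    have h0 : Filter.Tendsto (fun q : JPtC n => (q.1, ZX q)) (𝓝 (basePtC Θ)) (𝓝 0) := by
      have := hFan.continuousAt
      rwa [ContinuousAt, hF0] at this
    exact h0.eventually hΘ.eventually_analyticAt
  have hDan : AnalyticAt ℂ (fun q : JPtC n => Delta Θ (q.1, ZX q)) (basePtC Θ) := by
    apply analyticAt_det (E := fun q : JPtC n => DeltaMat Θ (q.1, ZX q))
    intro i μ
    have h1 : (fun q : JPtC n => DeltaMat Θ (q.1, ZX q) i μ)
        = fun q : JPtC n => pdT μ (rowF Θ i) (q.1, ZX q) := by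
      funext q; exact DeltaMat_apply Θ _ i μ
    rw [h1]
    have h2 : AnalyticAt ℂ (pdT μ (rowF Θ i)) ((basePtC Θ).1, ZX (basePtC Θ)) := by
      rw [hF0]; exact analyticAt_pdT (analyticAt_rowF hΘ i) μ
    exact AnalyticAt.comp (f := fun q : JPtC n => (q.1, ZX q)) h2 hFan
  have hΔev : ∀ᶠ q in 𝓝 (basePtC Θ), Delta Θ (q.1, ZX q) ≠ 0 := by
    refine hDan.continuousAt.eventually_ne ?_
    rw [hF0]; exact hLevi
  -- the combined pointwise condition
  have hE0 : ∀ᶠ q in 𝓝 (basePtC Θ), AnalyticAt ℂ ZX q ∧ AnalyticAt ℂ Θ (q.1, ZX q) ∧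
      Delta Θ (q.1, ZX q) ≠ 0 ∧
      (q.2.1 = Θ (q.1, ZX q) ∧ ∀ k : Fin n, q.2.2 k = pdZ k Θ (q.1, ZX q)) :=
    hZXev.and (hΘev.and (hΔev.and hid))
  -- STEP A : the linear system for the first λ-derivatives of the implicit functions
  have stepA : ∀ᶠ q in 𝓝 (basePtC Θ), ∀ ℓ : Fin n, ∀ i : Fin (n + 1),
      ∑ μ : Fin (n + 1), pdT μ (rowF Θ i) (q.1, ZX q) * gam ZX ℓ q μ
        = (Pi.single ℓ.succ 1 : Fin (n + 1) → ℂ) i := by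
    filter_upwards [hE0.eventually_nhds, hE0] with q hq hq0
    intro ℓ i
    have hZq : DifferentiableAt ℂ ZX q := hq0.1.differentiableAt
    induction i using Fin.cases with
    | zero =>
      have heq : (fun q' : JPtC n => q'.2.1) =ᶠ[𝓝 q]
          (fun q' => Θ (q'.1, ZX q')) := hq.mono fun q' h => h.2.2.2.1
      have h1 : (0 : ℂ) = ∑ μ : Fin (n + 1), gam ZX ℓ q μ * pdT μ Θ (q.1, ZX q) := by
        rw [← pdLC_comp hq0.2.1.differentiableAt hZq ℓ, ← pdLC_congr ℓ heq, pdLC_snd1]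
      rw [Pi.single_eq_of_ne (Fin.succ_ne_zero ℓ).symm]
      rw [show (fun μ : Fin (n+1) => pdT μ (rowF Θ 0) (q.1, ZX q) * gam ZX ℓ q μ)
        = fun μ : Fin (n+1) => gam ZX ℓ q μ * pdT μ Θ (q.1, ZX q) from
          funext fun μ => by rw [rowF_zero, mul_comm]]
      exact h1.symm
    | succ k =>
      have heq : (fun q' : JPtC n => q'.2.2 k) =ᶠ[𝓝 q]
          (fun q' => pdZ k Θ (q'.1, ZX q')) := hq.mono fun q' h => h.2.2.2.2 k
      have hf : DifferentiableAt ℂ (pdZ k Θ) (q.1, ZX q) :=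
        (analyticAt_pdZ hq0.2.1 k).differentiableAt
      have h1 : (Pi.single ℓ 1 : Fin n → ℂ) k
          = ∑ μ : Fin (n + 1), gam ZX ℓ q μ * pdT μ (pdZ k Θ) (q.1, ZX q) := by
        rw [← pdLC_comp hf hZq ℓ, ← pdLC_congr ℓ heq, pdLC_snd2]
      have h2 : (Pi.single ℓ.succ 1 : Fin (n + 1) → ℂ) k.succ
          = (Pi.single ℓ 1 : Fin n → ℂ) k := by
        simp [Pi.single_apply, Fin.succ_inj]
      rw [h2]
      rw [show (fun μ : Fin (n+1) => pdT μ (rowF Θ k.succ) (q.1, ZX q) * gam ZX ℓ q μ)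
        = fun μ : Fin (n+1) => gam ZX ℓ q μ * pdT μ (pdZ k Θ) (q.1, ZX q) from
          funext fun μ => by rw [rowF_succ, mul_comm]]
      exact h1.symm
  -- STEP B : Cramer's rule for the first derivatives
  have stepB : ∀ᶠ q in 𝓝 (basePtC Θ), ∀ ℓ : Fin n, ∀ μ : Fin (n + 1),
      gam ZX ℓ q μ = (Delta Θ (q.1, ZX q))⁻¹ * DeltaCol Θ ℓ μ (q.1, ZX q) := by
    filter_upwards [stepA, hE0] with q hq hq0
    intro ℓ μ
    have hmv : (DeltaMat Θ (q.1, ZX q)).mulVec (gam ZX ℓ q) = Pi.single ℓ.succ 1 := by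
      funext i
      rw [Matrix.mulVec, dotProduct]
      rw [show (fun μ : Fin (n+1) => DeltaMat Θ (q.1, ZX q) i μ * gam ZX ℓ q μ)
        = fun μ : Fin (n+1) => pdT μ (rowF Θ i) (q.1, ZX q) * gam ZX ℓ q μ from
          funext fun μ => by rw [DeltaMat_apply]]
      exact hq ℓ i
    have := solve_cramer _ _ _ hq0.2.2.1 hmv μ
    rw [DeltaCol]
    rwa [Matrix.cramer_apply] at this
  -- STEP E : the first-order derivative of Φ
  have stepE : ∀ᶠ q in 𝓝 (basePtC Θ),
      pdLC ℓ₂ (fun q' => g (q'.1, ZX q')) q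
        = ∑ μ : Fin (n + 1), gam ZX ℓ₂ q μ * pdT μ g (q.1, ZX q) := by
    filter_upwards [hE0] with q hq0
    exact pdLC_comp ((analyticAt_pdZ (analyticAt_pdZ hq0.2.1 k₁) k₂).differentiableAt)
      hq0.1.differentiableAt ℓ₂
  -- now the final eventual statement
  filter_upwards [stepE.eventually_nhds, stepA.eventually_nhds, stepB, hE0]
    with q hqE hqA hqB hq0
  obtain ⟨hZq, hΘq, hΔq, -⟩ := hq0
  set p : Pt n := (q.1, ZX q) with hp
  have hgan : AnalyticAt ℂ g p := analyticAt_pdZ (analyticAt_pdZ hΘq k₁) k₂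
  have hFanq : AnalyticAt ℂ (fun q' : JPtC n => (q'.1, ZX q')) q := analyticAt_fst.prod hZq
  have hcomp_an : ∀ f : Pt n → ℂ, AnalyticAt ℂ f p →
      AnalyticAt ℂ (fun q' => f (q'.1, ZX q')) q := fun f hf =>
    AnalyticAt.comp (f := fun q' : JPtC n => (q'.1, ZX q')) hf hFanq
  have hgam_an : ∀ ℓ μ, AnalyticAt ℂ (fun q' => gam ZX ℓ q' μ) q :=
    fun ℓ μ => analyticAt_gam hZq ℓ μ
  -- expansion of the LHS
  have hL1 : pdLC ℓ₁ (pdLC ℓ₂ (fun q' => g (q'.1, ZX q'))) q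
      = ∑ μ : Fin (n + 1),
          (pdLC ℓ₁ (fun q' => gam ZX ℓ₂ q' μ) q * pdT μ g p
            + gam ZX ℓ₂ q μ * ∑ ν : Fin (n + 1), gam ZX ℓ₁ q ν * pdT ν (pdT μ g) p) := by
    rw [pdLC_congr ℓ₁ hqE]
    rw [pdLC_sum Finset.univ (G := fun μ q' => gam ZX ℓ₂ q' μ * pdT μ g (q'.1, ZX q')) ℓ₁ (fun μ _ =>
      ((hgam_an ℓ₂ μ).mul (hcomp_an _ (analyticAt_pdT hgan μ))).differentiableAt)]
    refine Finset.sum_congr rfl fun μ _ => ?_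
    rw [pdLC_mul (G := fun q' => gam ZX ℓ₂ q' μ)
      (H := fun q' => pdT μ g (q'.1, ZX q')) ℓ₁
      (hgam_an ℓ₂ μ).differentiableAt (hcomp_an _ (analyticAt_pdT hgan μ)).differentiableAt]
    rw [pdLC_comp (analyticAt_pdT hgan μ).differentiableAt hZq.differentiableAt ℓ₁]
  -- the linear system for the λ-derivatives of gam
  have hδsys : ∀ i : Fin (n + 1),
      ∑ μ : Fin (n + 1), pdT μ (rowF Θ i) p * pdLC ℓ₁ (fun q' => gam ZX ℓ₂ q' μ) q
        = - ∑ μ : Fin (n + 1), ∑ ν : Fin (n + 1),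
            gam ZX ℓ₁ q ν * gam ZX ℓ₂ q μ * pdT ν (pdT μ (rowF Θ i)) p := by
    intro i
    have hrow_an : ∀ μ : Fin (n + 1),
        AnalyticAt ℂ (fun q' => pdT μ (rowF Θ i) (q'.1, ZX q')) q :=
      fun μ => hcomp_an _ (analyticAt_pdT (analyticAt_rowF hΘq i) μ)
    have h0 : pdLC ℓ₁
        (fun q' => ∑ μ : Fin (n + 1), pdT μ (rowF Θ i) (q'.1, ZX q') * gam ZX ℓ₂ q' μ) q
          = 0 := by
      have hconst : (fun q' => ∑ μ : Fin (n + 1),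
            pdT μ (rowF Θ i) (q'.1, ZX q') * gam ZX ℓ₂ q' μ)
          =ᶠ[𝓝 q] (fun _ => (Pi.single ℓ₂.succ 1 : Fin (n + 1) → ℂ) i) :=
        hqA.mono fun q' h => h ℓ₂ i
      rw [pdLC_congr ℓ₁ hconst]
      unfold pdLC
      rw [fderiv_fun_const]
      rfl
    rw [pdLC_sum Finset.univ (G := fun μ q' => pdT μ (rowF Θ i) (q'.1, ZX q') * gam ZX ℓ₂ q' μ) ℓ₁ (fun μ _ =>
      ((hrow_an μ).mul (hgam_an ℓ₂ μ)).differentiableAt)] at h0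
    have h1 : ∀ μ : Fin (n + 1),
        pdLC ℓ₁ (fun q' => pdT μ (rowF Θ i) (q'.1, ZX q') * gam ZX ℓ₂ q' μ) q
          = (∑ ν : Fin (n + 1), gam ZX ℓ₁ q ν * pdT ν (pdT μ (rowF Θ i)) p) * gam ZX ℓ₂ q μ
            + pdT μ (rowF Θ i) p * pdLC ℓ₁ (fun q' => gam ZX ℓ₂ q' μ) q := by
      intro μ
      rw [pdLC_mul (G := fun q' => pdT μ (rowF Θ i) (q'.1, ZX q'))
        (H := fun q' => gam ZX ℓ₂ q' μ) ℓ₁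
        (hrow_an μ).differentiableAt (hgam_an ℓ₂ μ).differentiableAt]
      rw [pdLC_comp (analyticAt_pdT (analyticAt_rowF hΘq i) μ).differentiableAt
        hZq.differentiableAt ℓ₁]
    simp only [h1] at h0
    rw [Finset.sum_add_distrib] at h0
    have h2 : ∑ μ : Fin (n + 1),
        (∑ ν : Fin (n + 1), gam ZX ℓ₁ q ν * pdT ν (pdT μ (rowF Θ i)) p) * gam ZX ℓ₂ q μ
        = ∑ μ : Fin (n + 1), ∑ ν : Fin (n + 1),
            gam ZX ℓ₁ q ν * gam ZX ℓ₂ q μ * pdT ν (pdT μ (rowF Θ i)) p := by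
      refine Finset.sum_congr rfl fun μ _ => ?_
      rw [Finset.sum_mul]
      exact Finset.sum_congr rfl fun ν _ => by ring
    rw [h2] at h0
    linear_combination h0
  -- STEP D : Cramer's rule for the λ-derivatives of gam
  have hδ : ∀ τ : Fin (n + 1), pdLC ℓ₁ (fun q' => gam ZX ℓ₂ q' τ) q
      = (Delta Θ p)⁻¹ * (- ∑ μ : Fin (n + 1), ∑ ν : Fin (n + 1),
          gam ZX ℓ₁ q ν * gam ZX ℓ₂ q μ * DeltaTT Θ μ ν τ p) := by
    intro τ
    have hmv : (DeltaMat Θ p).mulVec (fun μ => pdLC ℓ₁ (fun q' => gam ZX ℓ₂ q' μ) q)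
        = fun i => - ∑ μ : Fin (n + 1), ∑ ν : Fin (n + 1),
            gam ZX ℓ₁ q ν * gam ZX ℓ₂ q μ * pdT ν (pdT μ (rowF Θ i)) p := by
      funext i
      rw [Matrix.mulVec, dotProduct]
      rw [show (fun μ : Fin (n+1) => DeltaMat Θ p i μ *
            pdLC ℓ₁ (fun q' => gam ZX ℓ₂ q' μ) q)
        = fun μ : Fin (n+1) => pdT μ (rowF Θ i) p *
            pdLC ℓ₁ (fun q' => gam ZX ℓ₂ q' μ) q from
          funext fun μ => by rw [DeltaMat_apply]]
      exact hδsys i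
    have hsol := solve_cramer _ _ _ hΔq hmv τ
    rw [hsol]
    congr 1
    have hb : (fun i => - ∑ μ : Fin (n + 1), ∑ ν : Fin (n + 1),
          gam ZX ℓ₁ q ν * gam ZX ℓ₂ q μ * pdT ν (pdT μ (rowF Θ i)) p)
        = - ∑ μ : Fin (n + 1), ∑ ν : Fin (n + 1), (gam ZX ℓ₁ q ν * gam ZX ℓ₂ q μ) •
            (fun i => pdT ν (pdT μ (rowF Θ i)) p) := by
      funext i
      simp [Finset.sum_apply, smul_eq_mul]
    rw [hb, map_neg, map_sum]
    rw [Pi.neg_apply, Finset.sum_apply, neg_inj]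
    refine Finset.sum_congr rfl fun μ _ => ?_
    rw [map_sum, Finset.sum_apply]
    refine Finset.sum_congr rfl fun ν _ => ?_
    rw [map_smul, Pi.smul_apply, smul_eq_mul, cramer_col_DeltaTT]
  -- final assembly
  rw [hL1]
  simp only [hδ, hqB]
  exact final_algebra_s10 hΔq (fun μ => DeltaCol Θ ℓ₁ μ p) (fun μ => DeltaCol Θ ℓ₂ μ p)
    (fun τ => pdT τ g p) (fun μ ν τ => DeltaTT Θ μ ν τ p)
    (fun ν μ => pdT ν (pdT μ g) p)
    (fun μ ν τ => DeltaTT_symm hΘq μ ν τ) (fun μ ν => pdT_symm hgan μ ν)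
end
end

section
/- Let n ≥ 2, let Θ = Θ(z, z̄, w̄) be holomorphic near 0 in ℂ^{2n+1} with Θ = −w̄ + O(2) and Δ(0,0,0) ≠ 0, let ζ, ξ be the holomorphic implicit functions satisfying w ≡ Θ(z, ζ(z,w,λ), ξ(z,w,λ)) and λ_k ≡ Θ_{z_k}(z, ζ(z,w,λ), ξ(z,w,λ)), and define Φ_{k₁,k₂}(z,w,λ) := Θ_{z_{k₁}z_{k₂}}(z, ζ(z,w,λ), ξ(z,w,λ)) for 1 ≤ k₁,k₂ ≤ n. Then: (a) Φ_{k₁,k₂} = Φ_{k₂,k₁} for all k₁, k₂; and (b) for every fixed (z̄₀, w̄₀) sufficiently close to 0 in ℂⁿ×ℂ, the holomorphic function w(z) := Θ(z, z̄₀, w̄₀) satisfies, for all z near 0 and all 1 ≤ k₁, k₂ ≤ n, the second-order system w_{z_{k₁}z_{k₂}}(z) = Φ_{k₁,k₂}(z, w(z), w_{z₁}(z), …, w_{zₙ}(z)). In other words, the family of Segre varieties S_{z̄₀,w̄₀} = {w = Θ(z, z̄₀, w̄₀)} is exactly a family of solution graphs of the associated completely integrable system, whose general solution is Θ(z, z̄,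 w̄) with (z̄, w̄) as integration constants. -/
open Topology Filter Set

noncomputable section

/-- The right-hand sides Φ_{k₁,k₂}(z,w,λ) := Θ_{z_{k₁}z_{k₂}}(z, ζ(z,w,λ), ξ(z,w,λ))
of the associated second-order PDE system, (ζ, ξ) = ZX. -/
def PhiFun {n : ℕ} (Θ : Pt n → ℂ) (ZX : JPtC n → (Fin n → ℂ) × ℂ)
    (k₁ k₂ : Fin n) : JPtC n → ℂ :=
  fun q => pdZ k₂ (pdZ k₁ Θ) (q.1, ZX q)


/-- Symmetry of second partials in the z-directions, for a function analytic at the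
origin, holding on a neighborhood of the origin. -/
lemma pdZ_symm_aux {n : ℕ} {Θ : Pt n → ℂ} (hΘ : AnalyticAt ℂ Θ 0) :
    ∀ᶠ x in 𝓝 (0 : Pt n), ∀ k₁ k₂ : Fin n,
      pdZ k₂ (pdZ k₁ Θ) x = pdZ k₁ (pdZ k₂ Θ) x := by
  filter_upwards [hΘ.eventually_analyticAt.eventually_nhds] with x hx
  intro k₁ k₂
  have hx' : AnalyticAt ℂ Θ x := hx.self_of_nhds
  have hf' : AnalyticAt ℂ (fderiv ℂ Θ) x := hx'.fderiv
  have hev : ∀ᶠ y in 𝓝 x, HasFDerivAt Θ (fderiv ℂ Θ y) y := by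
    filter_upwards [hx] with y hy using hy.differentiableAt.hasFDerivAt
  have hsnd : HasFDerivAt (fderiv ℂ Θ) (fderiv ℂ (fderiv ℂ Θ) x) x :=
    hf'.differentiableAt.hasFDerivAt
  have hsym := second_derivative_symmetric_of_eventually hev hsnd
  have key : ∀ u v : Pt n,
      fderiv ℂ (fun y => fderiv ℂ Θ y v) x u = fderiv ℂ (fderiv ℂ Θ) x u v := by
    intro u v
    have h := fderiv_clm_apply (c := fderiv ℂ Θ) (u := fun _ => v)
      hf'.differentiableAt (differentiableAt_const v)
    rw [h]; simp
  show fderiv ℂ (fun p => fderiv ℂ Θ p ((Pi.single k₁ 1 : Fin n → ℂ), 0, 0)) x (Pi.single k₂ 1, 0, 0)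
      = fderiv ℂ (fun p => fderiv ℂ Θ p ((Pi.single k₂ 1 : Fin n → ℂ), 0, 0)) x (Pi.single k₁ 1, 0, 0)
  rw [key, key]
  exact hsym _ _

/-- (a) the right-hand sides Φ_{k₁,k₂} of the associated PDE system are
symmetric in (k₁,k₂); (b) for every fixed (z̄₀,w̄₀) close to 0, the Segre graphing
function w(z) = Θ(z, z̄₀, w̄₀) solves the system
w_{z_{k₁}z_{k₂}}(z) = Φ_{k₁,k₂}(z, w(z), w_z(z)). -/
theorem segre_varieties_solve_associated_system {n : ℕ} (hn : 2 ≤ n) (Θ : Pt n → ℂ)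
    (hΘ : AnalyticAt ℂ Θ 0) (h2 : IsOrderTwo Θ) (hLevi : Delta Θ 0 ≠ 0)
    (ZX : JPtC n → (Fin n → ℂ) × ℂ)
    (hZX : AnalyticAt ℂ ZX (basePtC Θ)) (hZX0 : ZX (basePtC Θ) = 0)
    (hid : ∀ᶠ q in 𝓝 (basePtC Θ),
      q.2.1 = Θ (q.1, ZX q) ∧ ∀ k : Fin n, q.2.2 k = pdZ k Θ (q.1, ZX q)) :
    -- (a) symmetry
    (∀ k₁ k₂ : Fin n, ∀ᶠ q in 𝓝 (basePtC Θ),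
      PhiFun Θ ZX k₁ k₂ q = PhiFun Θ ZX k₂ k₁ q) ∧
    -- (b) every Segre variety is a solution graph
    (∀ᶠ p in 𝓝 (0 : Pt n), ∀ k₁ k₂ : Fin n,
      pdZ k₂ (pdZ k₁ Θ) p =
        PhiFun Θ ZX k₁ k₂ (p.1, Θ p, fun k => pdZ k Θ p)) := by
  classical
  -- The jet map of the Segre family and the "inverse" built from ZX.
  set F : Pt n → JPtC n := fun p => (p.1, Θ p, fun k => pdZ k Θ p) with hFdef
  set G : JPtC n → Pt n := fun q => (q.1, ZX q) with hGdef
  have hF0 : F 0 = basePtC Θ := rfl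
  have hG0 : G (basePtC Θ) = 0 := by
    show ((0 : Fin n → ℂ), ZX (basePtC Θ)) = 0
    rw [hZX0]
    rfl
  -- analyticity of the jet map
  have hpd : ∀ k : Fin n, AnalyticAt ℂ (pdZ k Θ) 0 := by
    intro k
    exact ((ContinuousLinearMap.apply ℂ ℂ
      (((Pi.single k 1 : Fin n → ℂ), 0, 0) : Pt n)).analyticAt _).comp hΘ.fderiv
  have hFan : AnalyticAt ℂ F 0 := by
    refine AnalyticAt.prod ?_ (AnalyticAt.prod ?_ ?_)
    · exact (ContinuousLinearMap.fst ℂ (Fin n → ℂ) ((Fin n → ℂ) × ℂ)).analyticAt _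
    · exact hΘ
    · exact AnalyticAt.pi hpd
  -- G is differentiable at the base point
  have hGdiff : DifferentiableAt ℂ G (basePtC Θ) := by
    exact DifferentiableAt.prodMk differentiableAt_fst hZX.differentiableAt
  -- F ∘ G = id near the base point
  have heq : (fun q => F (G q)) =ᶠ[𝓝 (basePtC Θ)] id := by
    filter_upwards [hid] with q hq
    obtain ⟨h1, h2⟩ := hq
    show ((q.1 : Fin n → ℂ), Θ (q.1, ZX q), fun k => pdZ k Θ (q.1, ZX q)) = q
    refine Prod.ext rfl (Prod.ext h1.symm ?_)
    funext k
    exact (h2 k).symm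
  -- hence the derivative of F at 0 is surjective, so bijective
  have hchain : (fderiv ℂ F 0).comp (fderiv ℂ G (basePtC Θ)) = ContinuousLinearMap.id ℂ _ := by
    have h1 : fderiv ℂ (fun q => F (G q)) (basePtC Θ) = fderiv ℂ (id : JPtC n → JPtC n) (basePtC Θ) :=
      heq.fderiv_eq
    rw [fderiv_id] at h1
    rw [← h1]
    rw [show (fun q => F (G q)) = F ∘ G from rfl]
    rw [fderiv_comp _ (hG0 ▸ hFan.differentiableAt) hGdiff, hG0]
  have hsurj : Function.Surjective (fderiv ℂ F 0) := by
    intro y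
    exact ⟨fderiv ℂ G (basePtC Θ) y, by
      have := congrArg (fun (L : JPtC n →L[ℂ] JPtC n) => L y) hchain
      simpa using this⟩
  have hrank : Module.finrank ℂ (Pt n) = Module.finrank ℂ (JPtC n) := by
    simp [Module.finrank_prod, Module.finrank_pi]
    ring
  have hinj : Function.Injective (fderiv ℂ F 0) :=
    (LinearMap.injective_iff_surjective_of_finrank_eq_finrank hrank).mpr hsurj
  -- inverse function theorem setup
  let e : Pt n ≃ₗ[ℂ] JPtC n := LinearEquiv.ofBijective (fderiv ℂ F 0).toLinearMap ⟨hinj, hsurj⟩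
  let eC : Pt n ≃L[ℂ] JPtC n := e.toContinuousLinearEquiv
  have heC : (eC : Pt n →L[ℂ] JPtC n) = fderiv ℂ F 0 := by
    apply ContinuousLinearMap.ext
    intro v
    rfl
  have hstrict : HasStrictFDerivAt F (eC : Pt n →L[ℂ] JPtC n) 0 := by
    rw [heC]
    exact (hFan.contDiffAt (n := 2)).hasStrictFDerivAt (by norm_num)
  let ph := hstrict.toOpenPartialHomeomorph F
  have hmem : (0 : Pt n) ∈ ph.source := hstrict.mem_toOpenPartialHomeomorph_source
  have hsrc : ph.source ∈ 𝓝 (0 : Pt n) := ph.open_source.mem_nhds hmem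
  have hphF : (ph : Pt n → JPtC n) = F := hstrict.toOpenPartialHomeomorph_coe
  -- continuity facts
  have hFc : Filter.Tendsto F (𝓝 (0 : Pt n)) (𝓝 (basePtC Θ)) := by
    have := hFan.continuousAt.tendsto
    rwa [hF0] at this
  have hGc : Filter.Tendsto G (𝓝 (basePtC Θ)) (𝓝 (0 : Pt n)) := by
    have := hGdiff.continuousAt.tendsto
    rwa [hG0] at this
  constructor
  · -- (a) symmetry
    intro k₁ k₂
    filter_upwards [hGc.eventually (pdZ_symm_aux hΘ)] with q hq
    exact hq k₁ k₂
  · -- (b) Segre varieties are solutions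
    have hGF : Filter.Tendsto (fun p => G (F p)) (𝓝 (0 : Pt n)) (𝓝 (0 : Pt n)) :=
      hGc.comp hFc
    filter_upwards [hsrc, hGF.eventually (eventually_mem_nhds_iff.mpr hsrc),
      hFc.eventually hid] with p hp hGFp hP
    intro k₁ k₂
    obtain ⟨h1, h2⟩ := hP
    have hFG : F (G (F p)) = F p := by
      show ((F p).1, Θ ((F p).1, ZX (F p)), fun k => pdZ k Θ ((F p).1, ZX (F p))) = F p
      refine Prod.ext rfl (Prod.ext h1.symm ?_)
      funext k
      exact (h2 k).symm
    have hinjOn : Set.InjOn F ph.source := by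
      rw [← hphF]
      exact ph.injOn
    have hGFmem : G (F p) ∈ ph.source := mem_of_mem_nhds hGFp
    have hGFeq : G (F p) = p := hinjOn hGFmem hp hFG
    show pdZ k₂ (pdZ k₁ Θ) p = pdZ k₂ (pdZ k₁ Θ) (G (F p))
    rw [hGFeq]
end
end
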